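/- arXiv:2509.20815 — 4 statements merged into one kernel-verified Lean document; each statement's English description precedes it below -/
import Mathlib

section
/- For every ordering i_1,…,i_n of 𝐧, the set Θ^𝐦_{i_1,…,i_n} is an ideal of the Laurent polynomial ring ℚ[z_1^{±1},…,z_n^{±1}], and the quotient ℚ[z_1^{±1},…,z_n^{±1}]/Θ^𝐦_{i_1,…,i_n} is a finite-dimensional ℚ-vector space. -/
open scoped BigOperators

/-! ### Iterated Laurent series -/

noncomputable def ILaux (K : Type) [Field K] : ℕ → Σ' (T : Type), Field T
  | 0 => ⟨K, inferInstance⟩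
  | n+1 => ⟨@LaurentSeries (ILaux K n).1 (letI := (ILaux K n).2; inferInstance),
            letI := (ILaux K n).2; inferInstance⟩

noncomputable instance ILaux.instField (K : Type) [Field K] (n : ℕ) : Field (ILaux K n).1 :=
  (ILaux K n).2

/-- `IterLaurent K n` is the `n`-fold iterated Laurent series field
`K((t_n))((t_{n-1}))⋯((t_1))`, with `t_1` the outermost (innermost in the notation) variable. -/
noncomputable def IterLaurent (K : Type) [Field K] (n : ℕ) : Type := (ILaux K n).1

noncomputable instance IterLaurent.instField (K : Type) [Field K] (n : ℕ) :
    Field (IterLaurent K n) := (ILaux K n).2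

/-- The variable `t_a` of the iterated Laurent series field. -/
noncomputable def tvar (K : Type) [Field K] : (n : ℕ) → Fin n → IterLaurent K n
  | n+1, ⟨0, _⟩ => (HahnSeries.single (1:ℤ) (1 : IterLaurent K n) : LaurentSeries (IterLaurent K n))
  | n+1, ⟨a+1, _h⟩ => (HahnSeries.C (tvar K n ⟨a, by omega⟩) : LaurentSeries (IterLaurent K n))

/-- Iterated extraction of the coefficient of `t_1⁻¹ t_2⁻¹ ⋯ t_n⁻¹`. -/
noncomputable def ires (K : Type) [Field K] : (n : ℕ) → IterLaurent K n → K
  | 0, x => x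
  | n+1, x => ires K n ((x : LaurentSeries (IterLaurent K n)).coeff (-1))

/-- Constants embed into the iterated Laurent series field. -/
noncomputable def constIL (K : Type) [Field K] : (n : ℕ) → (K →+* IterLaurent K n)
  | 0 => RingHom.id K
  | n+1 => ((HahnSeries.C : IterLaurent K n →+* LaurentSeries (IterLaurent K n)).comp (constIL K n))

/-! ### Laurent polynomials -/

/-- The ring of Laurent polynomials over `K` in variables indexed by `ι`. -/
noncomputable abbrev LaurentPoly (K : Type) [CommRing K] (ι : Type) : Type :=
  AddMonoidAlgebra K (ι →₀ ℤ)

/-- Evaluation of a Laurent polynomial at (invertible) values `v` in a field `L`,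
transporting coefficients along `φ`. -/
noncomputable def lpEval {K L ι : Type} [CommRing K] [Field L] (φ : K →+* L) (v : ι → L)
    (F : LaurentPoly K ι) : L :=
  F.coeff.sum fun d c => φ c * d.prod fun a k => v a ^ k

/-- Renaming of variables of a Laurent polynomial along a bijection. -/
noncomputable def lpRename {K : Type} [CommRing K] {ι κ : Type} (e : ι ≃ κ) :
    LaurentPoly K ι ≃ₐ[K] LaurentPoly K κ :=
  AddMonoidAlgebra.domCongr K K (Finsupp.domCongr e)

/-- The variable `z_c` as a Laurent polynomial. -/
noncomputable def lpVar {K : Type} [CommRing K] {ι : Type} (c : ι) : LaurentPoly K ι :=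
  AddMonoidAlgebra.single (Finsupp.single c 1) 1

/-! ### Framed paths, acceptable collections -/

/-- Formal framed paths `e_k ⋯ e_1 o_{i,ℓ}` for a quiver with arrow set `E` and
framing vector `m` (validity of the chain of arrows is a separate predicate). -/
inductive FPath (I E : Type) (m : I → ℕ) : Type
  | base (i : I) (ℓ : Fin (m i)) : FPath I E m
  | cons (e : E) (p : FPath I E m) : FPath I E m

/-- The head (ending vertex) of a framed path. -/
def FPath.headI {I E : Type} {m : I → ℕ} (hd : E → I) : FPath I E m → I
  | .base i _ => i
  | .cons e _ => hd e

/-- Validity of a framed path: consecutive arrows compose. -/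
def FPath.Valid {I E : Type} {m : I → ℕ} (tl hd : E → I) : FPath I E m → Prop
  | .base _ _ => True
  | .cons e p => tl e = p.headI hd ∧ p.Valid tl hd

variable {I E : Type}

section AccColl

variable (tl hd : E → I) (m n : I → ℕ) (N : ℕ) [LinearOrder (FPath I E m)]

/-- An acceptable collection `S = {p_1 < ⋯ < p_N}` of framed paths. -/
structure AccColl where
  path : Fin N → FPath I E m
  valid : ∀ a, (path a).Valid tl hd
  mono : StrictMono path
  counts : ∀ i : I, Nat.card {a : Fin N // (path a).headI hd = i} = n i
  acc : ∀ b : Fin N, (∃ i ℓ, path b = .base i ℓ) ∨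
    ∃ a : Fin N, a < b ∧ ∃ e : E, path b = .cons e (path a)

variable {tl hd m n N}

/-- Lexicographic (strict) order on acceptable collections. -/
def AccColl.Lt (S' S : AccColl tl hd m n N) : Prop :=
  ∃ b : Fin N, (∀ a, a < b → S'.path a = S.path a) ∧ S'.path b < S.path b

/-- Lexicographic (non-strict) order on acceptable collections. -/
def AccColl.Le (S' S : AccColl tl hd m n N) : Prop :=
  AccColl.Lt S' S ∨ S'.path = S.path

/-- `#{e ∈ E : tail(e) = head(p_a), head(e) = head(p_b), e p_a ≤ p_b}`. -/
noncomputable def AccColl.cntE (S : AccColl tl hd m n N) (a b : Fin N) : ℕ :=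
  Nat.card {e : E // tl e = (S.path a).headI hd ∧ hd e = (S.path b).headI hd ∧
    FPath.cons e (S.path a) ≤ S.path b}

/-- `#{ℓ : o_{i_a,ℓ} ≤ p_a}`. -/
noncomputable def AccColl.cntO (S : AccColl tl hd m n N) (a : Fin N) : ℕ :=
  Nat.card {ℓ : Fin (m ((S.path a).headI hd)) // FPath.base ((S.path a).headI hd) ℓ ≤ S.path a}

end AccColl

section Mu

variable (tl hd : E → I) (m n : I → ℕ) (N : ℕ) [LinearOrder (FPath I E m)]
variable [DecidableEq I]

/-- The linear functional `μ_S`, computed using a listing `e` of the variables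
(compatible listings give the same value on color-symmetric Laurent polynomials). -/
noncomputable def muFun (S : AccColl tl hd m n (N := N)) (e : Fin N ≃ (Σ i : I, Fin (n i)))
    (F : LaurentPoly ℚ (Σ i : I, Fin (n i))) : ℚ :=
  ires ℚ N <|
    lpEval (constIL ℚ N) (fun c => 1 + tvar ℚ N (e.symm c)) F *
    (∏ p ∈ Finset.filter (fun p : Fin N × Fin N => p.1 < p.2) Finset.univ,
      (tvar ℚ N p.2 - tvar ℚ N p.1) ^
        (((if (S.path p.1).headI hd = (S.path p.2).headI hd then 1 else 0) : ℤ)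
          - (S.cntE p.1 p.2 : ℤ))) *
    ∏ a : Fin N, tvar ℚ N a ^ (-(S.cntO a : ℤ))

end Mu

section Theta

variable (tl hd : E → I) (m : I → ℕ) (N : ℕ) [DecidableEq I]

/-- The set `Θ^𝐦_{i_1,…,i_N}` of Laurent polynomials in `z_1, …, z_N`. -/
noncomputable def ThetaOrd (io : Fin N → I) : Set (LaurentPoly ℚ (Fin N)) :=
  {F | ∀ d : Fin N → ℤ,
    ires ℚ N (
      (∏ a : Fin N, (1 + tvar ℚ N a) ^ d a) *
      lpEval (constIL ℚ N) (fun a => 1 + tvar ℚ N a) F *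
      (∏ p ∈ Finset.filter (fun p : Fin N × Fin N => p.1 < p.2) Finset.univ,
        (tvar ℚ N p.2 - tvar ℚ N p.1) ^
          (((if io p.1 = io p.2 then 1 else 0) : ℤ)
            - (Nat.card {e : E // tl e = io p.1 ∧ hd e = io p.2} : ℤ))) *
      ∏ a : Fin N, tvar ℚ N a ^ (-(m (io a) : ℤ))) = 0}

end Theta

section Vn

variable {I : Type} (n : I → ℕ)

/-- The space `V_𝐧` of color-symmetric Laurent polynomials. -/
noncomputable def VSym : Submodule ℚ (LaurentPoly ℚ (Σ i : I, Fin (n i))) where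
  carrier := {F | ∀ σ : Equiv.Perm (Σ i : I, Fin (n i)),
    (∀ c, (σ c).1 = c.1) → lpRename (K := ℚ) σ F = F}
  add_mem' := by intro F G hF hG σ hσ; simp [map_add, hF σ hσ, hG σ hσ]
  zero_mem' := by intro σ hσ; simp
  smul_mem' := by intro c F hF σ hσ; simp [map_smul, hF σ hσ]

end Vn

section ThetaFull

variable (tl hd : E → I) (m n : I → ℕ) (N : ℕ) [DecidableEq I]

/-- The set `Θ_𝐧^𝐦 ⊆ V_𝐧`. -/
noncomputable def ThetaFull : Set (LaurentPoly ℚ (Σ i : I, Fin (n i))) :=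
  {F | F ∈ VSym n ∧ ∀ e : Fin N ≃ (Σ i : I, Fin (n i)),
    lpRename e.symm F ∈ ThetaOrd tl hd m N (fun a => (e a).1)}

end ThetaFull

namespace St5
open HahnSeries

variable {K : Type} [Field K]

/-- Identity map viewing an iterated Laurent series as a Laurent series. -/
def toL {K : Type} [Field K] {n : ℕ} (x : IterLaurent K (n+1)) :
    LaurentSeries (IterLaurent K n) := x

/-- Identity map viewing a Laurent series as an iterated Laurent series. -/
def ofL {K : Type} [Field K] {n : ℕ} (x : LaurentSeries (IterLaurent K n)) :
    IterLaurent K (n+1) := x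

@[simp] lemma toL_ofL {n : ℕ} (x : LaurentSeries (IterLaurent K n)) : toL (ofL x) = x := rfl
@[simp] lemma ofL_toL {n : ℕ} (x : IterLaurent K (n+1)) : ofL (toL x) = x := rfl
lemma toL_mul {n : ℕ} (x y : IterLaurent K (n+1)) : toL (x * y) = toL x * toL y := rfl
lemma toL_add {n : ℕ} (x y : IterLaurent K (n+1)) : toL (x + y) = toL x + toL y := rfl
lemma toL_one {n : ℕ} : toL (1 : IterLaurent K (n+1)) = 1 := rfl
lemma ofL_mul {n : ℕ} (x y : LaurentSeries (IterLaurent K n)) : ofL (x * y) = ofL x * ofL y := rfl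
lemma ofL_add {n : ℕ} (x y : LaurentSeries (IterLaurent K n)) : ofL (x + y) = ofL x + ofL y := rfl
lemma ofL_one {n : ℕ} : ofL (1 : LaurentSeries (IterLaurent K n)) = 1 := rfl

/-- Coefficient extraction at the outermost variable. -/
noncomputable def lcoeff {K : Type} [Field K] {n : ℕ} (x : IterLaurent K (n+1)) (k : ℤ) :
    IterLaurent K n :=
  (toL x).coeff k

lemma lcoeff_def {n : ℕ} (x : IterLaurent K (n+1)) (k : ℤ) : lcoeff x k = (toL x).coeff k := rfl

/-- `DegGE r x` : `x` is supported in total degree `≥ r`. -/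
def DegGE (K : Type) [Field K] : (n : ℕ) → ℤ → IterLaurent K n → Prop
  | 0, r, x => x ≠ 0 → r ≤ 0
  | n+1, r, x => ∀ k : ℤ, DegGE K n (r - k) (lcoeff x k)

lemma lcoeff_add {n : ℕ} (x y : IterLaurent K (n+1)) (k : ℤ) :
    lcoeff (x + y) k = lcoeff x k + lcoeff y k := rfl

lemma lcoeff_zero {n : ℕ} (k : ℤ) : lcoeff (0 : IterLaurent K (n+1)) k = 0 := rfl

lemma degGE_zero {n : ℕ} (r : ℤ) : DegGE K n r 0 := by
  induction n generalizing r with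
  | zero => exact fun h => absurd rfl h
  | succ n ih => intro k; rw [lcoeff_zero]; exact ih _

lemma degGE_mono {n : ℕ} {r r' : ℤ} (h : r' ≤ r) {x : IterLaurent K n} (hx : DegGE K n r x) :
    DegGE K n r' x := by
  induction n generalizing r r' with
  | zero => exact fun hne => le_trans h (hx hne)
  | succ n ih => intro k; exact ih (by omega) (hx k)

lemma degGE_add {n : ℕ} {r : ℤ} {x y : IterLaurent K n}
    (hx : DegGE K n r x) (hy : DegGE K n r y) : DegGE K n r (x + y) := by
  induction n generalizing r with
  | zero =>
    intro hne
    rcases eq_or_ne x 0 with rfl | h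
    · exact hy (by simpa using hne)
    · exact hx h
  | succ n ih => intro k; rw [lcoeff_add]; exact ih (hx k) (hy k)

lemma degGE_sum {n : ℕ} {r : ℤ} {α : Type*} (s : Finset α) (f : α → IterLaurent K n)
    (h : ∀ a ∈ s, DegGE K n r (f a)) : DegGE K n r (∑ a ∈ s, f a) := by
  classical
  induction s using Finset.cons_induction with
  | empty => simpa using degGE_zero r
  | cons a s ha ih =>
    rw [Finset.sum_cons]
    exact degGE_add (h a (Finset.mem_cons_self a s)) (ih fun b hb => h b (Finset.mem_cons_of_mem hb))

lemma lcoeff_mul {n : ℕ} (x y : IterLaurent K (n+1)) (k : ℤ) :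
    lcoeff (x * y) k = ∑ ij ∈ Finset.antidiagonal
      (toL x).isPWO_support (toL y).isPWO_support k,
      lcoeff x ij.1 * lcoeff y ij.2 :=
  HahnSeries.coeff_mul

lemma degGE_mul {n : ℕ} {r s : ℤ} {x y : IterLaurent K n}
    (hx : DegGE K n r x) (hy : DegGE K n s y) : DegGE K n (r + s) (x * y) := by
  induction n generalizing r s with
  | zero =>
    intro hne
    have h1 : x ≠ 0 := left_ne_zero_of_mul hne
    have h2 : y ≠ 0 := right_ne_zero_of_mul hne
    have := hx h1; have := hy h2; omega
  | succ n ih =>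
    intro k
    rw [lcoeff_mul]
    refine degGE_sum _ _ fun ij hij => ?_
    rw [Finset.mem_antidiagonal] at hij
    have : r + s - k = (r - ij.1) + (s - ij.2) := by rw [← hij.2.2]; ring
    rw [this]
    exact ih (hx ij.1) (hy ij.2)

lemma degGE_one {n : ℕ} : DegGE K n 0 (1 : IterLaurent K n) := by
  induction n with
  | zero => intro _; exact le_refl 0
  | succ n ih =>
    intro k
    rcases eq_or_ne k 0 with rfl | hk
    · have h1 : lcoeff (1 : IterLaurent K (n+1)) 0 = 1 := by
        show ((1 : LaurentSeries (IterLaurent K n))).coeff 0 = 1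
        rw [← HahnSeries.single_zero_one, HahnSeries.coeff_single_same]
      rw [h1]; simpa using ih
    · have h1 : lcoeff (1 : IterLaurent K (n+1)) k = 0 := by
        show ((1 : LaurentSeries (IterLaurent K n))).coeff k = 0
        rw [← HahnSeries.single_zero_one, HahnSeries.coeff_single_of_ne hk]
      rw [h1]; exact degGE_zero _

end St5
namespace St5
open HahnSeries

variable {K : Type} [Field K]

lemma degGE_pow {n : ℕ} {r : ℤ} {x : IterLaurent K n} (hx : DegGE K n r x) :
    ∀ k : ℕ, DegGE K n (k * r) (x ^ k)
  | 0 => by rw [pow_zero]; simpa using degGE_one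
  | k+1 => by
    rw [pow_succ]
    have := degGE_mul (degGE_pow hx k) hx
    refine degGE_mono (le_of_eq ?_) this
    push_cast
    ring

lemma degGE_zpow {n : ℕ} {r : ℤ} {x y : IterLaurent K n} (hxy : x * y = 1)
    (hx : DegGE K n r x) (hy : DegGE K n (-r) y) :
    ∀ k : ℤ, DegGE K n (k * r) (x ^ k)
  | Int.ofNat k => by
    rw [Int.ofNat_eq_natCast, zpow_natCast]
    simpa using degGE_pow hx k
  | Int.negSucc k => by
    have hinv : x⁻¹ = y := inv_eq_of_mul_eq_one_right hxy
    rw [zpow_negSucc, ← inv_pow, hinv]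
    have := degGE_pow hy (k+1)
    refine degGE_mono (le_of_eq ?_) this
    rw [Int.negSucc_eq]
    push_cast
    ring

/-- `ires` of zero. -/
lemma ires_zero (n : ℕ) : ires K n 0 = 0 := by
  induction n with
  | zero => rfl
  | succ n ih =>
    show ires K n (lcoeff (0:IterLaurent K (n+1)) (-1)) = 0
    rw [lcoeff_zero]; exact ih

/-- The key vanishing criterion. -/
lemma ires_eq_zero_of_degGE {n : ℕ} {r : ℤ} {x : IterLaurent K n}
    (hx : DegGE K n r x) (hr : -(n : ℤ) < r) : ires K n x = 0 := by
  induction n generalizing r with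
  | zero =>
    by_contra h
    have := hx h
    omega
  | succ n ih =>
    show ires K n (lcoeff x (-1)) = 0
    exact ih (hx (-1)) (by omega)

lemma ires_add {n : ℕ} (x y : IterLaurent K n) :
    ires K n (x + y) = ires K n x + ires K n y := by
  induction n with
  | zero => rfl
  | succ n ih =>
    show ires K n (lcoeff (x+y) (-1)) = _
    rw [lcoeff_add]; exact ih _ _

lemma constIL_zero_apply (q : K) : constIL K 0 q = q := rfl

lemma constIL_succ_apply (n : ℕ) (q : K) :
    constIL K (n+1) q = HahnSeries.C (constIL K n q) := rfl

lemma ires_constIL_mul {n : ℕ} (q : K) (x : IterLaurent K n) :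
    ires K n (constIL K n q * x) = q * ires K n x := by
  induction n with
  | zero => rfl
  | succ n ih =>
    show ires K n (lcoeff (constIL K (n+1) q * x) (-1)) = _
    have h2 : toL (constIL K (n+1) q * x) = HahnSeries.C (constIL K n q) * toL x := rfl
    have : lcoeff (constIL K (n+1) q * x) (-1) = constIL K n q * lcoeff x (-1) := by
      rw [lcoeff_def, h2, HahnSeries.C_apply, HahnSeries.coeff_single_zero_mul]
      rfl
    rw [this, ih]
    rfl

lemma degGE_C {n : ℕ} {r : ℤ} {x : IterLaurent K n} (hx : DegGE K n r x) :
    DegGE K (n+1) r (ofL (HahnSeries.C x)) := by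
  intro k
  rcases eq_or_ne k 0 with rfl | hk
  · have h1 : lcoeff (ofL (HahnSeries.C x) : IterLaurent K (n+1)) 0 = x := by
      rw [lcoeff_def, toL_ofL, HahnSeries.C_apply, HahnSeries.coeff_single_same]
    rw [h1]; simpa using hx
  · have h1 : lcoeff (ofL (HahnSeries.C x) : IterLaurent K (n+1)) k = 0 := by
      rw [lcoeff_def, toL_ofL, HahnSeries.C_apply, HahnSeries.coeff_single_of_ne hk]
    rw [h1]; exact degGE_zero _

lemma degGE_constIL (n : ℕ) (q : K) : DegGE K n 0 (constIL K n q) := by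
  induction n with
  | zero => intro _; exact le_refl 0
  | succ n ih => exact degGE_C ih

end St5
namespace St5
open HahnSeries

variable {K : Type} [Field K]

/-- Inverse of the variable `t_a`. -/
noncomputable def itvar (K : Type) [Field K] : (n : ℕ) → Fin n → IterLaurent K n
  | n+1, ⟨0, _⟩ => ofL (HahnSeries.single (-1:ℤ) (1 : IterLaurent K n))
  | n+1, ⟨a+1, _h⟩ => ofL (HahnSeries.C (itvar K n ⟨a, by omega⟩))

lemma tvar_zero_def (n : ℕ) :
    tvar K (n+1) ⟨0, Nat.succ_pos n⟩ = ofL (HahnSeries.single (1:ℤ) 1) := rfl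

lemma tvar_succ_def (n : ℕ) (a : ℕ) (h : a + 1 < n + 1) :
    tvar K (n+1) ⟨a+1, h⟩ = ofL (HahnSeries.C (tvar K n ⟨a, by omega⟩)) := rfl

lemma tvar_mul_itvar : ∀ (n : ℕ) (a : Fin n), tvar K n a * itvar K n a = 1
  | n+1, ⟨0, _⟩ => by
    show ofL (HahnSeries.single (1:ℤ) 1) * ofL (HahnSeries.single (-1:ℤ) 1) = 1
    rw [← ofL_mul, HahnSeries.single_mul_single]
    norm_num
    exact ofL_one
  | n+1, ⟨a+1, h⟩ => by
    show ofL (HahnSeries.C (tvar K n ⟨a, by omega⟩)) * ofL (HahnSeries.C (itvar K n ⟨a, by omega⟩))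
      = 1
    rw [← ofL_mul, ← map_mul, tvar_mul_itvar n ⟨a, by omega⟩, map_one]
    exact ofL_one

lemma degGE_tvar : ∀ (n : ℕ) (a : Fin n), DegGE K n 1 (tvar K n a)
  | n+1, ⟨0, _⟩ => by
    intro k
    rcases eq_or_ne k 1 with rfl | hk
    · have h1 : lcoeff (tvar K (n+1) ⟨0, Nat.succ_pos n⟩) 1 = 1 := by
        rw [tvar_zero_def, lcoeff_def, toL_ofL, HahnSeries.coeff_single_same]
      rw [show ((⟨0, Nat.succ_pos n⟩ : Fin (n+1)) : Fin (n+1)) = ⟨0, Nat.succ_pos n⟩ from rfl] at *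
      rw [h1]
      simpa using degGE_one
    · have h1 : lcoeff (tvar K (n+1) ⟨0, Nat.succ_pos n⟩) k = 0 := by
        rw [tvar_zero_def, lcoeff_def, toL_ofL, HahnSeries.coeff_single_of_ne hk]
      rw [h1]; exact degGE_zero _
  | n+1, ⟨a+1, h⟩ => by
    rw [tvar_succ_def]
    exact degGE_C (degGE_tvar n _)

lemma degGE_itvar : ∀ (n : ℕ) (a : Fin n), DegGE K n (-1) (itvar K n a)
  | n+1, ⟨0, _⟩ => by
    intro k
    rcases eq_or_ne k (-1) with rfl | hk
    · have h1 : lcoeff (itvar K (n+1) ⟨0, Nat.succ_pos n⟩) (-1) = 1 := by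
        show (HahnSeries.single (-1:ℤ) (1 : IterLaurent K n)).coeff (-1) = 1
        rw [HahnSeries.coeff_single_same]
      rw [h1]; simpa using degGE_one
    · have h1 : lcoeff (itvar K (n+1) ⟨0, Nat.succ_pos n⟩) k = 0 := by
        show (HahnSeries.single (-1:ℤ) (1 : IterLaurent K n)).coeff k = 0
        rw [HahnSeries.coeff_single_of_ne hk]
      rw [h1]; exact degGE_zero _
  | n+1, ⟨a+1, h⟩ => by
    show DegGE K (n+1) (-1) (ofL (HahnSeries.C (itvar K n ⟨a, by omega⟩)))
    exact degGE_C (degGE_itvar n _)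

/-- `t_a` as a unit. -/
noncomputable def tvarUnit (K : Type) [Field K] (n : ℕ) (a : Fin n) : (IterLaurent K n)ˣ :=
  ⟨tvar K n a, itvar K n a, tvar_mul_itvar n a,
    by rw [mul_comm]; exact tvar_mul_itvar n a⟩

end St5
namespace St5
open HahnSeries

variable {K : Type} [Field K]

lemma neg_one_eq_constIL (n : ℕ) : (-1 : IterLaurent K n) = constIL K n (-1) := by
  rw [map_neg, map_one]

lemma degGE_neg {n : ℕ} {r : ℤ} {x : IterLaurent K n} (hx : DegGE K n r x) :
    DegGE K n r (-x) := by
  have := degGE_mul (degGE_constIL n (-1 : K)) hx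
  rw [← neg_one_eq_constIL, neg_one_mul, zero_add] at this
  exact this

lemma ofPowerSeries_coeff_neg (p : PowerSeries (IterLaurent K n)) {k : ℤ} (hk : k < 0) :
    (HahnSeries.ofPowerSeries ℤ (IterLaurent K n) p).coeff k = 0 := by
  rw [HahnSeries.ofPowerSeries_apply]
  apply HahnSeries.embDomain_notin_range
  rintro ⟨m, hm⟩
  simp only [Nat.castOrderEmbedding_apply] at hm
  omega

lemma degGE_ofPowerSeries {n : ℕ} {r : ℤ} (p : PowerSeries (IterLaurent K n))
    (h : ∀ k : ℕ, DegGE K n (r - k) (PowerSeries.coeff k p)) :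
    DegGE K (n+1) r (ofL (HahnSeries.ofPowerSeries ℤ (IterLaurent K n) p)) := by
  intro k
  rcases lt_or_ge k 0 with hk | hk
  · rw [lcoeff_def, toL_ofL, ofPowerSeries_coeff_neg p hk]
    exact degGE_zero _
  · obtain ⟨m, rfl⟩ := Int.eq_ofNat_of_zero_le hk
    rw [lcoeff_def, toL_ofL]
    rw [HahnSeries.ofPowerSeries_apply_coeff]
    exact h m

/-- Inverse of `1 + t_a`. -/
noncomputable def ginv (K : Type) [Field K] : (n : ℕ) → Fin n → IterLaurent K n
  | n+1, ⟨0, _⟩ => ofL (HahnSeries.ofPowerSeries ℤ (IterLaurent K n)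
      (-PowerSeries.invUnitsSub (-1 : (IterLaurent K n)ˣ)))
  | n+1, ⟨a+1, _h⟩ => ofL (HahnSeries.C (ginv K n ⟨a, by omega⟩))

lemma one_add_tvar_mul_ginv : ∀ (n : ℕ) (a : Fin n),
    (1 + tvar K n a) * ginv K n a = 1
  | n+1, ⟨0, _⟩ => by
    show (1 + ofL (HahnSeries.single (1:ℤ) 1)) *
      ofL (HahnSeries.ofPowerSeries ℤ (IterLaurent K n)
        (-PowerSeries.invUnitsSub (-1 : (IterLaurent K n)ˣ))) = 1
    rw [show (1 : IterLaurent K (n+1)) = ofL 1 from rfl, ← ofL_add, ← ofL_mul]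
    rw [show (1 : LaurentSeries (IterLaurent K n)) + HahnSeries.single (1:ℤ) 1
        = HahnSeries.ofPowerSeries ℤ (IterLaurent K n) (1 + PowerSeries.X) by
      rw [map_add, RingHom.map_one, HahnSeries.ofPowerSeries_X]]
    rw [← map_mul]
    rw [show (1 + PowerSeries.X) * (-PowerSeries.invUnitsSub (-1 : (IterLaurent K n)ˣ))
        = PowerSeries.invUnitsSub (-1 : (IterLaurent K n)ˣ) *
          (PowerSeries.C ((-1 : (IterLaurent K n)ˣ) : IterLaurent K n)
            - PowerSeries.X) by
      rw [show (((-1 : (IterLaurent K n)ˣ) : IterLaurent K n)) = -1 by simp, map_neg,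
        RingHom.map_one]
      ring]
    rw [PowerSeries.invUnitsSub_mul_sub, map_one]
  | n+1, ⟨a+1, h⟩ => by
    show (1 + ofL (HahnSeries.C (tvar K n ⟨a, by omega⟩))) *
      ofL (HahnSeries.C (ginv K n ⟨a, by omega⟩)) = 1
    rw [show (1 : IterLaurent K (n+1)) = ofL 1 from rfl, ← ofL_add, ← ofL_mul, ← map_one
      (HahnSeries.C (R := IterLaurent K n) (Γ := ℤ)), ← map_add, ← map_mul,
      one_add_tvar_mul_ginv n ⟨a, by omega⟩, map_one]

lemma degGE_ginv : ∀ (n : ℕ) (a : Fin n), DegGE K n 0 (ginv K n a)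
  | n+1, ⟨0, _⟩ => by
    show DegGE K (n+1) 0 (ofL (HahnSeries.ofPowerSeries ℤ (IterLaurent K n)
      (-PowerSeries.invUnitsSub (-1 : (IterLaurent K n)ˣ))))
    apply degGE_ofPowerSeries
    intro k
    rw [map_neg, PowerSeries.coeff_invUnitsSub, one_divp]
    apply degGE_neg
    apply degGE_mono (show (0:ℤ) - k ≤ 0 by omega)
    rw [Units.val_inv_eq_inv_val, Units.val_pow_eq_pow_val, Units.val_neg, Units.val_one]
    rcases Nat.even_or_odd (k+1) with he | ho
    · rw [he.neg_one_pow, inv_one]; exact degGE_one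
    · rw [ho.neg_one_pow]
      rw [show ((-1 : IterLaurent K n))⁻¹ = -1 by rw [inv_neg, inv_one]]
      exact degGE_neg degGE_one
  | n+1, ⟨a+1, h⟩ => by
    show DegGE K (n+1) 0 (ofL (HahnSeries.C (ginv K n ⟨a, by omega⟩)))
    exact degGE_C (degGE_ginv n _)

end St5
namespace St5
open HahnSeries

variable {K : Type} [Field K]

lemma one_add_tvar_ne_zero (n : ℕ) (a : Fin n) : (1 + tvar K n a) ≠ 0 := by
  intro h
  have h2 := one_add_tvar_mul_ginv (K := K) n a
  rw [h, zero_mul] at h2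
  exact zero_ne_one h2

lemma tvar_ne_zero (n : ℕ) (a : Fin n) : tvar K n a ≠ 0 := by
  intro h
  have h2 := tvar_mul_itvar (K := K) n a
  rw [h, zero_mul] at h2
  exact zero_ne_one h2

/-- Inverse of `t_q - t_p` for `p < q`. -/
noncomputable def sinv (K : Type) [Field K] : (n : ℕ) → Fin n → Fin n → IterLaurent K n
  | n+1, ⟨0, _⟩, ⟨j+1, hj⟩ => ofL (HahnSeries.ofPowerSeries ℤ (IterLaurent K n)
      (PowerSeries.invUnitsSub (tvarUnit K n ⟨j, by omega⟩)))
  | n+1, ⟨i+1, hi⟩, ⟨j+1, hj⟩ => ofL (HahnSeries.C (sinv K n ⟨i, by omega⟩ ⟨j, by omega⟩))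
  | _+1, _, ⟨0, _⟩ => 0

lemma sub_tvar_mul_sinv : ∀ (n : ℕ) (p q : Fin n), p < q →
    (tvar K n q - tvar K n p) * sinv K n p q = 1
  | n+1, ⟨0, h0⟩, ⟨j+1, hj⟩, _ => by
    show (ofL (HahnSeries.C (tvar K n ⟨j, by omega⟩)) - ofL (HahnSeries.single (1:ℤ) 1)) *
      ofL (HahnSeries.ofPowerSeries ℤ (IterLaurent K n)
        (PowerSeries.invUnitsSub (tvarUnit K n ⟨j, by omega⟩))) = 1
    have hsub : ofL (HahnSeries.C (tvar K n ⟨j, by omega⟩)) - ofL (HahnSeries.single (1:ℤ) 1)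
        = ofL (HahnSeries.ofPowerSeries ℤ (IterLaurent K n)
            (PowerSeries.C ((tvarUnit K n ⟨j, by omega⟩ : _ˣ) : IterLaurent K n)
              - PowerSeries.X)) := by
      show ofL _ = ofL _
      congr 1
      rw [map_sub, HahnSeries.ofPowerSeries_C, HahnSeries.ofPowerSeries_X]
      rfl
    rw [hsub, ← ofL_mul, ← map_mul, mul_comm, PowerSeries.invUnitsSub_mul_sub, map_one]
    exact ofL_one
  | n+1, ⟨i+1, hi⟩, ⟨j+1, hj⟩, hlt => by
    show (ofL (HahnSeries.C (tvar K n ⟨j, by omega⟩)) - ofL (HahnSeries.C (tvar K n ⟨i, by omega⟩)))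
      * ofL (HahnSeries.C (sinv K n ⟨i, by omega⟩ ⟨j, by omega⟩)) = 1
    rw [show (ofL (HahnSeries.C (tvar K n ⟨j, by omega⟩)) - ofL (HahnSeries.C (tvar K n ⟨i, by omega⟩)))
      * ofL (HahnSeries.C (sinv K n ⟨i, by omega⟩ ⟨j, by omega⟩))
      = ofL ((HahnSeries.C (tvar K n ⟨j, by omega⟩) - HahnSeries.C (tvar K n ⟨i, by omega⟩)) *
        HahnSeries.C (sinv K n ⟨i, by omega⟩ ⟨j, by omega⟩)) from rfl]
    rw [← map_sub, ← map_mul]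
    rw [sub_tvar_mul_sinv n ⟨i, by omega⟩ ⟨j, by omega⟩ (by
      simp only [Fin.mk_lt_mk] at hlt ⊢; omega), map_one]
    exact ofL_one
  | n+1, ⟨i, hi⟩, ⟨0, h0⟩, hlt => by
    simp only [Fin.mk_lt_mk] at hlt
    omega

lemma degGE_sinv : ∀ (n : ℕ) (p q : Fin n), p < q → DegGE K n (-1) (sinv K n p q)
  | n+1, ⟨0, h0⟩, ⟨j+1, hj⟩, _ => by
    show DegGE K (n+1) (-1) (ofL (HahnSeries.ofPowerSeries ℤ (IterLaurent K n)
      (PowerSeries.invUnitsSub (tvarUnit K n ⟨j, by omega⟩))))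
    apply degGE_ofPowerSeries
    intro k
    rw [PowerSeries.coeff_invUnitsSub, one_divp, ← inv_pow, Units.val_pow_eq_pow_val]
    rw [show ((tvarUnit K n ⟨j, by omega⟩)⁻¹ : (IterLaurent K n)ˣ).val = itvar K n ⟨j, by omega⟩
      from rfl]
    refine degGE_mono (le_of_eq ?_) (degGE_pow (degGE_itvar n _) (k+1))
    push_cast; ring
  | n+1, ⟨i+1, hi⟩, ⟨j+1, hj⟩, hlt => by
    show DegGE K (n+1) (-1) (ofL (HahnSeries.C (sinv K n ⟨i, by omega⟩ ⟨j, by omega⟩)))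
    exact degGE_C (degGE_sinv n _ _ (by simp only [Fin.mk_lt_mk] at hlt ⊢; omega))
  | n+1, ⟨i, hi⟩, ⟨0, h0⟩, hlt => by
    simp only [Fin.mk_lt_mk] at hlt
    omega

lemma sub_tvar_ne_zero (n : ℕ) (p q : Fin n) (h : p < q) :
    tvar K n q - tvar K n p ≠ 0 := by
  intro h0
  have h2 := sub_tvar_mul_sinv (K := K) n p q h
  rw [h0, zero_mul] at h2
  exact zero_ne_one h2

end St5
namespace St5
open HahnSeries

/-- The monomial evaluation monoid homomorphism. -/
noncomputable def gmon {L ι : Type} [Field L] (v : ι → L) (hv : ∀ a, v a ≠ 0) :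
    Multiplicative (ι →₀ ℤ) →* L where
  toFun d := (Multiplicative.toAdd d).prod fun a k => v a ^ k
  map_one' := by
    show ((0 : ι →₀ ℤ)).prod (fun a k => v a ^ k) = 1
    exact Finsupp.prod_zero_index
  map_mul' d e := by
    show ((Multiplicative.toAdd d) + (Multiplicative.toAdd e)).prod _ = _
    exact Finsupp.prod_add_index' (fun a => zpow_zero (v a)) (fun a b c => zpow_add₀ (hv a) b c)

lemma lpEval_eq_liftNC {L ι : Type} [Field L] (φ : ℚ →+* L) (v : ι → L) (hv : ∀ a, v a ≠ 0)
    (F : LaurentPoly ℚ ι) :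
    lpEval φ v F =
      AddMonoidAlgebra.liftNCRingHom φ (gmon v hv) (fun _ _ => Commute.all _ _) F := by
  induction F using AddMonoidAlgebra.induction_linear with
  | zero => simp [lpEval, Finsupp.sum_zero_index]
  | add f g hf hg =>
    rw [map_add, ← hf, ← hg, lpEval, AddMonoidAlgebra.coeff_add, Finsupp.sum_add_index' (fun d => by rw [map_zero, zero_mul])
      (fun d c1 c2 => by rw [map_add, add_mul])]
    rfl
  | single d c =>
    rw [lpEval, AddMonoidAlgebra.coeff_single, Finsupp.sum_single_index (by rw [map_zero, zero_mul])]
    show _ = AddMonoidAlgebra.liftNC (φ : ℚ →+ L) (gmon v hv) (AddMonoidAlgebra.single d c)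
    rw [AddMonoidAlgebra.liftNC_single]
    rfl

lemma lpEval_mul {L ι : Type} [Field L] (φ : ℚ →+* L) (v : ι → L) (hv : ∀ a, v a ≠ 0)
    (F G : LaurentPoly ℚ ι) :
    lpEval φ v (F * G) = lpEval φ v F * lpEval φ v G := by
  rw [lpEval_eq_liftNC φ v hv, lpEval_eq_liftNC φ v hv, lpEval_eq_liftNC φ v hv, map_mul]

lemma lpEval_one {L ι : Type} [Field L] (φ : ℚ →+* L) (v : ι → L) (hv : ∀ a, v a ≠ 0) :
    lpEval φ v (1 : LaurentPoly ℚ ι) = 1 := by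
  rw [lpEval_eq_liftNC φ v hv, map_one]

lemma lpEval_add {L ι : Type} [Field L] (φ : ℚ →+* L) (v : ι → L)
    (F G : LaurentPoly ℚ ι) :
    lpEval φ v (F + G) = lpEval φ v F + lpEval φ v G := by
  rw [lpEval, AddMonoidAlgebra.coeff_add, Finsupp.sum_add_index' (fun d => by rw [map_zero, zero_mul])
      (fun d c1 c2 => by rw [map_add, add_mul])]
  rfl

lemma lpEval_zero {L ι : Type} [Field L] (φ : ℚ →+* L) (v : ι → L) :
    lpEval φ v (0 : LaurentPoly ℚ ι) = 0 := by
  simp [lpEval, Finsupp.sum_zero_index]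

lemma lpEval_sub {L ι : Type} [Field L] (φ : ℚ →+* L) (v : ι → L) (hv : ∀ a, v a ≠ 0)
    (F G : LaurentPoly ℚ ι) :
    lpEval φ v (F - G) = lpEval φ v F - lpEval φ v G := by
  rw [lpEval_eq_liftNC φ v hv, lpEval_eq_liftNC φ v hv, lpEval_eq_liftNC φ v hv, map_sub]

lemma lpEval_pow {L ι : Type} [Field L] (φ : ℚ →+* L) (v : ι → L) (hv : ∀ a, v a ≠ 0)
    (F : LaurentPoly ℚ ι) (k : ℕ) :
    lpEval φ v (F ^ k) = lpEval φ v F ^ k := by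
  rw [lpEval_eq_liftNC φ v hv, lpEval_eq_liftNC φ v hv, map_pow]

lemma lpEval_single {L ι : Type} [Field L] (φ : ℚ →+* L) (v : ι → L)
    (d : ι →₀ ℤ) (c : ℚ) :
    lpEval φ v (AddMonoidAlgebra.single d c) = φ c * d.prod fun a k => v a ^ k := by
  rw [lpEval, AddMonoidAlgebra.coeff_single, Finsupp.sum_single_index (by rw [map_zero, zero_mul])]

lemma lpEval_lpVar {L ι : Type} [Field L] (φ : ℚ →+* L) (v : ι → L) (a : ι) :
    lpEval φ v (lpVar a) = v a := by
  rw [lpVar, lpEval_single, map_one, one_mul,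
    Finsupp.prod_single_index (h := fun b k => v b ^ k) (zpow_zero (v a)), zpow_one]

end St5
namespace St5
open HahnSeries

lemma degGE_prod {K : Type} [Field K] {n : ℕ} {α : Type*} (s : Finset α) (f : α → ℤ)
    (g : α → IterLaurent K n) (h : ∀ a ∈ s, DegGE K n (f a) (g a)) :
    DegGE K n (∑ a ∈ s, f a) (∏ a ∈ s, g a) := by
  classical
  induction s using Finset.cons_induction with
  | empty => simpa using degGE_one
  | cons a s ha ih =>
    rw [Finset.sum_cons, Finset.prod_cons]
    exact degGE_mul (h a (Finset.mem_cons_self a s))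
      (ih fun b hb => h b (Finset.mem_cons_of_mem hb))

lemma degGE_one_add_tvar_zpow {K : Type} [Field K] (n : ℕ) (b : Fin n) (k : ℤ) :
    DegGE K n 0 ((1 + tvar K n b) ^ k) := by
  have hx : DegGE K n 0 (1 + tvar K n b) :=
    degGE_add (degGE_one (K := K)) (degGE_mono (by omega) (degGE_tvar n b))
  have := degGE_zpow (one_add_tvar_mul_ginv n b) hx
    (by simpa using degGE_ginv (K := K) n b) k
  simpa using this

lemma degGE_tvar_zpow {K : Type} [Field K] (n : ℕ) (b : Fin n) (k : ℤ) :
    DegGE K n k (tvar K n b ^ k) := by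
  have := degGE_zpow (tvar_mul_itvar (K := K) n b) (degGE_tvar (K := K) n b) (degGE_itvar (K := K) n b) k
  simpa using this

lemma degGE_sub_tvar_zpow {K : Type} [Field K] (n : ℕ) (p q : Fin n) (h : p < q) (k : ℤ) :
    DegGE K n k ((tvar K n q - tvar K n p) ^ k) := by
  have hsub : DegGE K n 1 (tvar K n q - tvar K n p) := by
    rw [sub_eq_add_neg]
    exact degGE_add (degGE_tvar (K := K) n q) (degGE_neg (degGE_tvar (K := K) n p))
  have := degGE_zpow (sub_tvar_mul_sinv (K := K) n p q h) hsub (degGE_sinv (K := K) n p q h) k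
  simpa using this

/-- Key lemma: high powers of `z_a - 1` belong to `Θ`. -/
lemma pow_mem_thetaOrd {I E : Type} [DecidableEq I] (tl hd : E → I) (m : I → ℕ)
    (N : ℕ) (io : Fin N → I) (a : Fin N) (M : ℕ)
    (hM : (1 : ℤ) ≤ (M : ℤ)
      + (∑ p ∈ Finset.filter (fun p : Fin N × Fin N => p.1 < p.2) Finset.univ,
          (((if io p.1 = io p.2 then 1 else 0) : ℤ)
            - (Nat.card {e : E // tl e = io p.1 ∧ hd e = io p.2} : ℤ)))
      - ∑ b : Fin N, (m (io b) : ℤ)) :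
    ((lpVar a - 1 : LaurentPoly ℚ (Fin N)) ^ M) ∈ ThetaOrd tl hd m N io := by
  intro d
  have hv : ∀ b : Fin N, (1 + tvar ℚ N b) ≠ 0 := fun b => one_add_tvar_ne_zero N b
  have heval : lpEval (constIL ℚ N) (fun b => 1 + tvar ℚ N b) ((lpVar a - 1) ^ M)
      = tvar ℚ N a ^ M := by
    rw [lpEval_pow _ _ hv, lpEval_sub _ _ hv, lpEval_lpVar, lpEval_one _ _ hv]
    congr 1
    ring
  rw [heval]
  apply ires_eq_zero_of_degGE (r := (M : ℤ)
      + (∑ p ∈ Finset.filter (fun p : Fin N × Fin N => p.1 < p.2) Finset.univ,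
          (((if io p.1 = io p.2 then 1 else 0) : ℤ)
            - (Nat.card {e : E // tl e = io p.1 ∧ hd e = io p.2} : ℤ)))
      - ∑ b : Fin N, (m (io b) : ℤ))
  · have h1 : DegGE ℚ N 0 (∏ b : Fin N, (1 + tvar ℚ N b) ^ d b) := by
      have := degGE_prod (K := ℚ) (n := N) Finset.univ (fun _ => 0)
        (fun b => (1 + tvar ℚ N b) ^ d b) (fun b _ => degGE_one_add_tvar_zpow N b (d b))
      simpa using this
    have h2 : DegGE ℚ N M (tvar ℚ N a ^ M) := by
      have := degGE_pow (degGE_tvar (K := ℚ) N a) M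
      simpa using this
    have h3 : DegGE ℚ N (∑ p ∈ Finset.filter (fun p : Fin N × Fin N => p.1 < p.2) Finset.univ,
          (((if io p.1 = io p.2 then 1 else 0) : ℤ)
            - (Nat.card {e : E // tl e = io p.1 ∧ hd e = io p.2} : ℤ)))
        (∏ p ∈ Finset.filter (fun p : Fin N × Fin N => p.1 < p.2) Finset.univ,
          (tvar ℚ N p.2 - tvar ℚ N p.1) ^
            (((if io p.1 = io p.2 then 1 else 0) : ℤ)
              - (Nat.card {e : E // tl e = io p.1 ∧ hd e = io p.2} : ℤ))) := by
      refine degGE_prod _ _ _ fun p hp => ?_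
      have hlt : p.1 < p.2 := (Finset.mem_filter.mp hp).2
      exact degGE_sub_tvar_zpow N p.1 p.2 hlt _
    have h4 : DegGE ℚ N (∑ b : Fin N, -(m (io b) : ℤ))
        (∏ b : Fin N, tvar ℚ N b ^ (-(m (io b) : ℤ))) :=
      degGE_prod _ _ _ fun b _ => degGE_tvar_zpow N b _
    have := degGE_mul (degGE_mul (degGE_mul h1 h2) h3) h4
    refine degGE_mono (le_of_eq ?_) this
    rw [Finset.sum_neg_distrib]
    ring
  · omega

end St5
namespace St5
open HahnSeries

variable {I E : Type} [DecidableEq I] (tl hd : E → I) (m : I → ℕ) (N : ℕ) (io : Fin N → I)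

lemma thetaOrd_zero : (0 : LaurentPoly ℚ (Fin N)) ∈ ThetaOrd tl hd m N io := by
  intro d
  rw [lpEval_zero, mul_zero, zero_mul, zero_mul, ires_zero]

lemma thetaOrd_add {F G : LaurentPoly ℚ (Fin N)} (hF : F ∈ ThetaOrd tl hd m N io)
    (hG : G ∈ ThetaOrd tl hd m N io) : F + G ∈ ThetaOrd tl hd m N io := by
  intro d
  rw [lpEval_add]
  set A := ∏ b : Fin N, (1 + tvar ℚ N b) ^ d b
  set P := ∏ p ∈ Finset.filter (fun p : Fin N × Fin N => p.1 < p.2) Finset.univ,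
      (tvar ℚ N p.2 - tvar ℚ N p.1) ^
        (((if io p.1 = io p.2 then 1 else 0) : ℤ)
          - (Nat.card {e : E // tl e = io p.1 ∧ hd e = io p.2} : ℤ))
  set T := ∏ b : Fin N, tvar ℚ N b ^ (-(m (io b) : ℤ))
  set eF := lpEval (constIL ℚ N) (fun b => 1 + tvar ℚ N b) F
  set eG := lpEval (constIL ℚ N) (fun b => 1 + tvar ℚ N b) G
  have hsplit : A * (eF + eG) * P * T = A * eF * P * T + A * eG * P * T := by ring
  rw [hsplit, ires_add, hF d, hG d, add_zero]

lemma thetaOrd_single_mul {F : LaurentPoly ℚ (Fin N)} (hF : F ∈ ThetaOrd tl hd m N io)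
    (d' : Fin N →₀ ℤ) (c : ℚ) :
    (AddMonoidAlgebra.single d' c : LaurentPoly ℚ (Fin N)) * F ∈ ThetaOrd tl hd m N io := by
  intro d
  have hv : ∀ b : Fin N, (1 + tvar ℚ N b) ≠ 0 := fun b => one_add_tvar_ne_zero N b
  rw [lpEval_mul _ _ hv, lpEval_single]
  have hprod : (d'.prod fun b k => (1 + tvar ℚ N b) ^ k)
      = ∏ b : Fin N, (1 + tvar ℚ N b) ^ (d' b) :=
    Finsupp.prod_fintype _ _ (fun b => zpow_zero _)
  rw [hprod]
  set A := ∏ b : Fin N, (1 + tvar ℚ N b) ^ d b with hA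
  set A' := ∏ b : Fin N, (1 + tvar ℚ N b) ^ (d' b) with hA'
  set P := ∏ p ∈ Finset.filter (fun p : Fin N × Fin N => p.1 < p.2) Finset.univ,
      (tvar ℚ N p.2 - tvar ℚ N p.1) ^
        (((if io p.1 = io p.2 then 1 else 0) : ℤ)
          - (Nat.card {e : E // tl e = io p.1 ∧ hd e = io p.2} : ℤ))
  set T := ∏ b : Fin N, tvar ℚ N b ^ (-(m (io b) : ℤ))
  set eF := lpEval (constIL ℚ N) (fun b => 1 + tvar ℚ N b) F
  have hsplit : A * ((constIL ℚ N) c * A' * eF) * P * T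
      = constIL ℚ N c * ((A * A') * eF * P * T) := by ring
  rw [hsplit]
  have hmerge : A * A' = ∏ b : Fin N, (1 + tvar ℚ N b) ^ ((fun b => d b + d' b) b) := by
    rw [hA, hA', ← Finset.prod_mul_distrib]
    exact Finset.prod_congr rfl fun b _ => (zpow_add₀ (hv b) _ _).symm
  rw [hmerge, ires_constIL_mul, hF (fun b => d b + d' b), mul_zero]

lemma thetaOrd_mul_mem {F : LaurentPoly ℚ (Fin N)} (hF : F ∈ ThetaOrd tl hd m N io)
    (G : LaurentPoly ℚ (Fin N)) : G * F ∈ ThetaOrd tl hd m N io := by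
  have hrep : G * F = ∑ d ∈ G.coeff.support, AddMonoidAlgebra.single d (G.coeff d) * F := by
    conv_lhs => rw [← AddMonoidAlgebra.sum_coeff_single G]
    rw [Finsupp.sum_mul]
    rfl
  rw [hrep]
  refine Finset.sum_induction _ (fun x => x ∈ ThetaOrd tl hd m N io)
    (fun x y hx hy => thetaOrd_add tl hd m N io hx hy) (thetaOrd_zero tl hd m N io)
    (fun d _ => thetaOrd_single_mul tl hd m N io hF d (G.coeff d))

/-- `ThetaOrd` as an ideal. -/
noncomputable def thetaIdeal : Ideal (LaurentPoly ℚ (Fin N)) where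
  carrier := ThetaOrd tl hd m N io
  add_mem' := thetaOrd_add tl hd m N io
  zero_mem' := thetaOrd_zero tl hd m N io
  smul_mem' := fun c {x} hx => by
    rw [smul_eq_mul]
    exact thetaOrd_mul_mem tl hd m N io hx c

lemma thetaIdeal_coe : (thetaIdeal tl hd m N io : Set (LaurentPoly ℚ (Fin N)))
    = ThetaOrd tl hd m N io := rfl

end St5
namespace St5

lemma single_nsmul {ι : Type} (d : ι →₀ ℤ) : ∀ n : ℕ,
    (AddMonoidAlgebra.single (n • d) (1:ℚ) : LaurentPoly ℚ ι)
      = (AddMonoidAlgebra.single d (1:ℚ) : LaurentPoly ℚ ι) ^ n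
  | 0 => by rw [zero_smul, pow_zero]; exact AddMonoidAlgebra.one_def.symm
  | n+1 => by
    rw [succ_nsmul, pow_succ, ← single_nsmul d n, AddMonoidAlgebra.single_mul_single, mul_one]

lemma inv_mem_of_nilpotent {A : Type*} [CommRing A] [Algebra ℚ A] (S : Subalgebra ℚ A)
    {x y : A} (hx : x ∈ S) (hn : IsNilpotent (x - 1)) (hxy : x * y = 1) : y ∈ S := by
  obtain ⟨M0, hM0⟩ := hn
  set s := ∑ i ∈ Finset.range M0, (1 - x) ^ i with hs
  have hsS : s ∈ S := Subalgebra.sum_mem _ fun i _ => pow_mem (sub_mem (one_mem S) hx) i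
  have h0 : (1 - x) ^ M0 = 0 := by
    have h1 : (1 - x) = -(x - 1) := by ring
    rw [h1, neg_pow, hM0, mul_zero]
  have hg := geom_sum_mul (1 - x) M0
  rw [h0] at hg
  have hxs : x * s = 1 := by linear_combination -hg
  have hy : y = s := by
    calc y = y * (x * s) := by rw [hxs, mul_one]
    _ = (x * y) * s := by ring
    _ = s := by rw [hxy, one_mul]
  rwa [hy]

lemma thetaIdeal_quot_finite {I E : Type} [DecidableEq I] (tl hd : E → I)
    (m : I → ℕ) (N : ℕ) (io : Fin N → I) :
    FiniteDimensional ℚ (LaurentPoly ℚ (Fin N) ⧸ thetaIdeal tl hd m N io) := by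
  classical
  set J := thetaIdeal tl hd m N io with hJ
  set M : ℕ := 1 + (∑ b : Fin N, m (io b))
    + ∑ p ∈ Finset.filter (fun p : Fin N × Fin N => p.1 < p.2) Finset.univ,
        Nat.card {e : E // tl e = io p.1 ∧ hd e = io p.2} with hM
  have hMmem : ∀ a : Fin N, ((lpVar a - 1 : LaurentPoly ℚ (Fin N)) ^ M) ∈ J := by
    intro a
    apply pow_mem_thetaOrd tl hd m N io a M
    have hb : ∀ p ∈ Finset.filter (fun p : Fin N × Fin N => p.1 < p.2) Finset.univ,
        -(Nat.card {e : E // tl e = io p.1 ∧ hd e = io p.2} : ℤ)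
        ≤ ((if io p.1 = io p.2 then 1 else 0) : ℤ)
          - (Nat.card {e : E // tl e = io p.1 ∧ hd e = io p.2} : ℤ) := by
      intro p _
      split <;> omega
    have hsum := Finset.sum_le_sum hb
    rw [Finset.sum_neg_distrib] at hsum
    rw [hM]
    push_cast
    omega
  set Φ := Ideal.Quotient.mkₐ ℚ J with hΦ
  set u : Fin N → (LaurentPoly ℚ (Fin N) ⧸ J) := fun a => Φ (lpVar a) with hu
  have hnilM : ∀ a : Fin N, (u a - 1) ^ M = 0 := by
    intro a
    have h1 : (u a - 1) ^ M = Φ ((lpVar a - 1) ^ M) := by rw [map_pow, map_sub, map_one]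
    rw [h1, hΦ, Ideal.Quotient.mkₐ_eq_mk, Ideal.Quotient.eq_zero_iff_mem]
    exact hMmem a
  set ψ := MvPolynomial.aeval (R := ℚ) u with hψ
  have hXa : ∀ a, ψ (MvPolynomial.X a) = u a := fun a => MvPolynomial.aeval_X u a
  have huR : ∀ a, u a ∈ ψ.range := fun a => ⟨MvPolynomial.X a, hXa a⟩
  have hone : (AddMonoidAlgebra.single (0 : Fin N →₀ ℤ) (1:ℚ) : LaurentPoly ℚ (Fin N)) = 1 :=
    AddMonoidAlgebra.one_def.symm
  have hmulS : ∀ (d d' : Fin N →₀ ℤ),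
      (AddMonoidAlgebra.single d (1:ℚ) : LaurentPoly ℚ (Fin N)) * AddMonoidAlgebra.single d' 1
        = AddMonoidAlgebra.single (d + d') 1 := by
    intro d d'
    rw [AddMonoidAlgebra.single_mul_single, one_mul]
  have hinv : ∀ a : Fin N,
      Φ (AddMonoidAlgebra.single (Finsupp.single a (-1:ℤ)) (1:ℚ)) ∈ ψ.range := by
    intro a
    refine inv_mem_of_nilpotent _ (huR a) ⟨M, hnilM a⟩ ?_
    have hm : (lpVar a : LaurentPoly ℚ (Fin N))
        * AddMonoidAlgebra.single (Finsupp.single a (-1:ℤ)) 1 = 1 := by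
      rw [lpVar, hmulS, ← Finsupp.single_add]
      norm_num [hone]
    rw [hu, ← map_mul, hm, map_one]
  have hsingle1 : ∀ d : Fin N →₀ ℤ,
      Φ (AddMonoidAlgebra.single d (1:ℚ)) ∈ ψ.range := by
    intro d
    induction d using Finsupp.induction with
    | zero => rw [hone, map_one]; exact one_mem _
    | single_add a b f haf hb ih =>
      rw [← hmulS, map_mul]
      refine mul_mem ?_ ih
      rcases b with nb | nb
      · have h2 : Finsupp.single a (Int.ofNat nb) = nb • Finsupp.single a (1:ℤ) := by
          rw [Finsupp.smul_single]
          norm_num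
        rw [h2, single_nsmul, map_pow]
        exact pow_mem (huR a) nb
      · have h2 : Finsupp.single a (Int.negSucc nb) = (nb+1) • Finsupp.single a (-1:ℤ) := by
          rw [Finsupp.smul_single]
          congr 1
          rw [Int.negSucc_eq]
          push_cast
          ring
        rw [h2, single_nsmul, map_pow]
        exact pow_mem (hinv a) (nb+1)
  have hsurj : Function.Surjective ψ := by
    intro x
    obtain ⟨F, rfl⟩ := Ideal.Quotient.mkₐ_surjective ℚ J x
    have hrep : Φ F ∈ ψ.range := by
      have hF : F = ∑ d ∈ F.coeff.support, AddMonoidAlgebra.single d (F.coeff d) :=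
        (AddMonoidAlgebra.sum_coeff_single F).symm
      rw [hF, map_sum]
      refine Subalgebra.sum_mem _ fun d _ => ?_
      have h2 : (AddMonoidAlgebra.single d (F.coeff d) : LaurentPoly ℚ (Fin N))
          = F.coeff d • AddMonoidAlgebra.single d 1 := by
        rw [AddMonoidAlgebra.smul_single]
        congr 1
        rw [smul_eq_mul, mul_one]
      rw [h2, map_smul]
      exact Subalgebra.smul_mem _ (hsingle1 d) (F.coeff d)
    exact hrep
  haveI hft : Algebra.FiniteType ℚ (LaurentPoly ℚ (Fin N) ⧸ J) :=
    Algebra.FiniteType.of_surjective ψ hsurj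
  haveI hint : Algebra.IsIntegral ℚ (LaurentPoly ℚ (Fin N) ⧸ J) := by
    rw [Algebra.isIntegral_def]
    intro x
    obtain ⟨p, rfl⟩ := hsurj x
    induction p using MvPolynomial.induction_on with
    | C c =>
      rw [show ψ (MvPolynomial.C c) = algebraMap ℚ _ c from MvPolynomial.aeval_C (f := u) c]
      exact isIntegral_algebraMap
    | add p q hp hq => rw [map_add]; exact hp.add hq
    | mul_X p a hp =>
      rw [map_mul, hXa]
      refine hp.mul ?_
      refine ⟨(Polynomial.X - Polynomial.C 1) ^ M, (Polynomial.monic_X_sub_C 1).pow M, ?_⟩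
      rw [← Polynomial.aeval_def, map_pow, map_sub, Polynomial.aeval_X, Polynomial.aeval_C,
        map_one]
      exact hnilM a
  exact Algebra.IsIntegral.finite

end St5

/-- For every ordering `i_1,…,i_n` of `𝐧`, the set `Θ^𝐦_{i_1,…,i_n}` is an
ideal of the Laurent polynomial ring `ℚ[z_1^{±1},…,z_n^{±1}]`, with finite-dimensional
quotient over `ℚ`. -/
theorem statement5 {I E : Type} [Fintype I] [DecidableEq I] [Fintype E]
    (tl hd : E → I) (m n : I → ℕ) (io : Fin (∑ i, n i) → I)
    (hio : ∀ i : I, Nat.card {a : Fin (∑ i, n i) // io a = i} = n i) :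
    ∃ J : Ideal (LaurentPoly ℚ (Fin (∑ i, n i))),
      (J : Set (LaurentPoly ℚ (Fin (∑ i, n i)))) = ThetaOrd tl hd m (∑ i, n i) io ∧
      FiniteDimensional ℚ (LaurentPoly ℚ (Fin (∑ i, n i)) ⧸ J) := by
  exact ⟨St5.thetaIdeal tl hd m (∑ i, n i) io, rfl,
    St5.thetaIdeal_quot_finite tl hd m (∑ i, n i) io⟩
end

section
/- Let x = (x_1,…,x_n) ∈ ℂ^n and let P := {σ ∈ S_n : x_{σ(a)} = x_a for all a} be the stabilizer of x in the symmetric group. For every polynomial f ∈ ℂ[z_1,…,z_n] invariant under P and every N ∈ ℕ, there exists a polynomial g ∈ ℂ[z_1,…,z_n] invariant under the full symmetric group S_n such that f − g ∈ J_x^N. (This is the polynomial form of the approximation claim proved inside Proposition 3.2: a P-invariant polynomial can be matched to arbitrarily high order at x by a fully symmetric one.) -/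
open MvPolynomial

private lemma st6_mem_span_of_eval_eq_zero {n : ℕ} (y : Fin n → ℂ) (p : MvPolynomial (Fin n) ℂ)
    (hp : MvPolynomial.eval y p = 0) :
    p ∈ Ideal.span (Set.range fun a : Fin n => MvPolynomial.X a - MvPolynomial.C (y a)) := by
  have key : ∀ q : MvPolynomial (Fin n) ℂ,
      q - C (eval y q) ∈ Ideal.span (Set.range fun a : Fin n => X a - C (y a)) := by
    intro q
    induction q using MvPolynomial.induction_on with
    | C a => simp
    | add p q hp hq =>
      have := Ideal.add_mem _ hp hq
      convert this using 1
      simp only [map_add, MvPolynomial.C_add]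
      ring
    | mul_X p i hp =>
      have h1 : p * X i - C (eval y (p * X i)) =
          p * (X i - C (y i)) + C (y i) * (p - C (eval y p)) := by
        simp only [map_mul, MvPolynomial.eval_X, MvPolynomial.C_mul]
        ring
      rw [h1]
      exact Ideal.add_mem _
        (Ideal.mul_mem_left _ _ (Ideal.subset_span ⟨i, rfl⟩))
        (Ideal.mul_mem_left _ _ hp)
  have := key p
  rwa [hp, map_zero, sub_zero] at this

/-- Let `x ∈ ℂ^n` and let `P` be its stabilizer in `S_n`. Every `P`-invariant
polynomial `f ∈ ℂ[z_1,…,z_n]` can be matched to arbitrarily high order at `x` by a fully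
symmetric polynomial: for every `N` there exists an `S_n`-invariant `g` with `f − g ∈ J_x^N`,
where `J_x` is the ideal generated by `z_1 − x_1, …, z_n − x_n`. -/
theorem statement6 (n : ℕ) (x : Fin n → ℂ) (f : MvPolynomial (Fin n) ℂ)
    (hf : ∀ σ : Equiv.Perm (Fin n), (∀ a, x (σ a) = x a) → MvPolynomial.rename σ f = f)
    (N : ℕ) :
    ∃ g : MvPolynomial (Fin n) ℂ,
      (∀ σ : Equiv.Perm (Fin n), MvPolynomial.rename σ g = g) ∧
      f - g ∈ (Ideal.span (Set.range fun a : Fin n =>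
        MvPolynomial.X a - MvPolynomial.C (x a))) ^ N := by
  classical
  set Jy : (Fin n → ℂ) → Ideal (MvPolynomial (Fin n) ℂ) :=
    fun y => Ideal.span (Set.range fun a : Fin n => X a - C (y a)) with hJy
  -- renaming lemma
  have hrename : ∀ (σ : Equiv.Perm (Fin n)) (p : MvPolynomial (Fin n) ℂ),
      p ∈ (Jy (x ∘ σ)) ^ N → rename σ p ∈ (Jy x) ^ N := by
    intro σ p hp
    have hmap : Ideal.map (rename (σ : Fin n → Fin n)).toRingHom (Jy (x ∘ σ)) ≤ Jy x := by
      rw [hJy, Ideal.map_span, Ideal.span_le]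
      rintro _ ⟨_, ⟨a, rfl⟩, rfl⟩
      have : (rename (σ : Fin n → Fin n)).toRingHom (X a - C ((x ∘ σ) a))
          = X (σ a) - C (x (σ a)) := by
        simp [map_sub, rename_X, rename_C]
      rw [this]
      exact Ideal.subset_span ⟨σ a, rfl⟩
    have h1 : (rename (σ : Fin n → Fin n)).toRingHom p ∈
        Ideal.map (rename (σ : Fin n → Fin n)).toRingHom ((Jy (x ∘ σ)) ^ N) :=
      Ideal.mem_map_of_mem _ hp
    rw [Ideal.map_pow] at h1
    exact Ideal.pow_right_mono hmap N h1
  -- the finite set of other orbit points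
  set Sbad : Finset (Fin n → ℂ) :=
    (Finset.univ.image fun σ : Equiv.Perm (Fin n) => x ∘ σ).erase x with hSbad
  have hne : ∀ y ∈ Sbad, ∃ i, y i ≠ x i := by
    intro y hy
    exact Function.ne_iff.mp (Finset.ne_of_mem_erase hy)
  choose a ha using hne
  set u0 : MvPolynomial (Fin n) ℂ :=
    ∏ y ∈ Sbad.attach, C ((x (a y.1 y.2) - y.1 (a y.1 y.2))⁻¹)
      * (X (a y.1 y.2) - C (y.1 (a y.1 y.2))) with hu0
  have hu0x : eval x u0 = 1 := by
    rw [hu0, map_prod]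
    apply Finset.prod_eq_one
    intro y _
    have hd : x (a y.1 y.2) - y.1 (a y.1 y.2) ≠ 0 :=
      sub_ne_zero_of_ne (Ne.symm (ha y.1 y.2))
    simp only [map_mul, map_sub, eval_C, eval_X]
    exact inv_mul_cancel₀ hd
  have hu0mem : ∀ y ∈ Sbad, u0 ∈ Jy y := by
    intro y hy
    rw [hu0, ← Finset.mul_prod_erase _ _ (Finset.mem_attach _ ⟨y, hy⟩)]
    refine Ideal.mul_mem_right _ _ (Ideal.mul_mem_left _ _ ?_)
    exact Ideal.subset_span ⟨a y hy, rfl⟩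
  -- bump polynomial
  obtain ⟨u, hu⟩ : ∃ u : MvPolynomial (Fin n) ℂ, u = u0 ^ N := ⟨_, rfl⟩
  obtain ⟨h, hh⟩ : ∃ h : MvPolynomial (Fin n) ℂ, h = 1 - (1 - u) ^ N := ⟨_, rfl⟩
  have hhbad : ∀ y ∈ Sbad, h ∈ (Jy y) ^ N := by
    intro y hy
    have hfac : h = (∑ i ∈ Finset.range N, (1 - u) ^ i) * u := by
      rw [hh]
      linear_combination geom_sum_mul (1 - u) N
    rw [hfac, hu]
    exact Ideal.mul_mem_left _ _ (Ideal.pow_mem_pow (hu0mem y hy) N)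
  have hhx : 1 - h ∈ (Jy x) ^ N := by
    have h1u : 1 - u ∈ Jy x := by
      apply st6_mem_span_of_eval_eq_zero
      simp [hu, hu0x]
    have heq1 : 1 - h = (1 - u) ^ N := by rw [hh]; ring
    rw [heq1]
    exact Ideal.pow_mem_pow h1u N
  -- the stabilizer set and averaging
  set Pset : Finset (Equiv.Perm (Fin n)) :=
    Finset.univ.filter (fun σ => ∀ b, x (σ b) = x b) with hPset
  have hone : (1 : Equiv.Perm (Fin n)) ∈ Pset := by simp [hPset]
  have hk : ((Pset.card : ℂ)) ≠ 0 :=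
    Nat.cast_ne_zero.mpr (Finset.card_pos.mpr ⟨1, hone⟩).ne'
  set F : MvPolynomial (Fin n) ℂ := f * h with hF
  refine ⟨C ((Pset.card : ℂ)⁻¹) * ∑ σ : Equiv.Perm (Fin n), rename σ F, ?_, ?_⟩
  · -- symmetry
    intro τ
    rw [map_mul, rename_C, map_sum]
    congr 1
    refine Fintype.sum_bijective (fun σ => τ * σ) (Group.mulLeft_bijective τ) _ _ ?_
    intro σ
    rw [rename_rename]
    rfl
  · -- membership
    have key : (C ((Pset.card : ℂ)) * f - ∑ σ : Equiv.Perm (Fin n), rename σ F)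
        ∈ (Jy x) ^ N := by
      have hsplit : ∑ σ : Equiv.Perm (Fin n), rename σ F =
          (∑ σ ∈ Pset, rename σ F) + ∑ σ ∈ Psetᶜ, rename σ F :=
        (Finset.sum_add_sum_compl Pset _).symm
      have hcf : C ((Pset.card : ℂ)) * f = ∑ σ ∈ Pset, f := by
        rw [Finset.sum_const, nsmul_eq_mul, ← map_natCast (C : ℂ →+* MvPolynomial (Fin n) ℂ)]
      rw [hsplit, hcf]
      have hre : (∑ _σ ∈ Pset, f) - (∑ σ ∈ Pset, rename (⇑σ) F + ∑ σ ∈ Psetᶜ, rename (⇑σ) F)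
          = (∑ σ ∈ Pset, (f - rename (⇑σ) F)) - ∑ σ ∈ Psetᶜ, rename (⇑σ) F := by
        rw [Finset.sum_sub_distrib]
        ring
      rw [hre]
      refine sub_mem (Ideal.sum_mem _ ?_) (Ideal.sum_mem _ ?_)
      · intro σ hσ
        have hσ' : ∀ b, x (σ b) = x b := (Finset.mem_filter.mp hσ).2
        have hxσ : x ∘ ⇑σ = x := funext hσ'
        have heq2 : f - rename (⇑σ) F = f * rename (⇑σ) (1 - h) := by
          rw [hF, map_mul, hf σ hσ', map_sub, map_one, mul_sub, mul_one]
        rw [heq2]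
        refine Ideal.mul_mem_left _ _ (hrename σ _ ?_)
        rw [hxσ]
        exact hhx
      · intro σ hσ
        have hσ' : ¬ ∀ b, x (σ b) = x b := by
          intro hcon
          exact (Finset.mem_compl.mp hσ) (Finset.mem_filter.mpr ⟨Finset.mem_univ _, hcon⟩)
        have hyS : x ∘ ⇑σ ∈ Sbad := by
          rw [hSbad]
          refine Finset.mem_erase.mpr ⟨?_, Finset.mem_image.mpr ⟨σ, Finset.mem_univ _, rfl⟩⟩
          intro hcon
          exact hσ' fun b => congrFun hcon b
        refine hrename σ _ ?_
        rw [hF]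
        exact Ideal.mul_mem_left _ _ (hhbad _ hyS)
    have heq : f - C ((Pset.card : ℂ)⁻¹) * ∑ σ : Equiv.Perm (Fin n), rename σ F
        = C ((Pset.card : ℂ)⁻¹) * (C ((Pset.card : ℂ)) * f
            - ∑ σ : Equiv.Perm (Fin n), rename σ F) := by
      rw [mul_sub, ← mul_assoc, ← C_mul, inv_mul_cancel₀ hk, C_1, one_mul]
    rw [heq]
    exact Ideal.mul_mem_left _ _ key
end

section
/- Suppose the highest ℓ-weight ψ has all zeroes and poles in q^ℤ, i.e. ψ_i(z) = c_i·∏_{s∈ℤ}(1 − q^s/z)^{l_{i,s}} / ∏_{s∈ℤ}(1 − q^s/z)^{m_{i,s}} with c_i ∈ 𝕂* and l_{i,s}, m_{i,s} ∈ ℕ almost all zero, let 1/ψ^den denote the highest ℓ-weight (∏_{s∈ℤ}(1 − q^s/z)^{−m_{i,s}})_{i∈I}, set Δ_𝐥 := ∏_{i∈I}∏_{a=1}^{n_i}∏_{s∈ℤ}(1 − q^s/z_{ia})^{l_{i,s}} ∈ 𝒱_𝐧, and suppose every entry x_{ia} of 𝐱 is an integer power of q. Then for every F ∈ 𝒱_𝐧: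 F ∈ Θ(ψ)_𝐱 if and only if Δ_𝐥·F ∈ Θ(1/ψ^den)_𝐱. Consequently, multiplication by Δ_𝐥 induces a 𝕂-linear isomorphism 𝒱_𝐧/Θ(ψ)_𝐱 ≅ (Δ_𝐥·𝒱_𝐧) / ((Δ_𝐥·𝒱_𝐧) ∩ Θ(1/ψ^den)_𝐱). -/
open scoped BigOperators

noncomputable instance {K ι : Type} [Field K] : IsDomain (LaurentPoly K ι) :=
  NoZeroDivisors.to_isDomain _

/-! ### The ground field `𝕂 = ℚ(q)` -/

/-- The ground field `𝕂 = ℚ(q)`. -/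
noncomputable abbrev QQq : Type := RatFunc ℚ

/-- The variable `q ∈ 𝕂`. -/
noncomputable def qq : QQq := RatFunc.X

section SetupB

variable {I : Type} [Fintype I] [LinearOrder I] [DecidableEq I]

/-- The function `ζ_{ij}`, evaluated in a field `L` (at an invertible element `w`),
where `qL` is the image of `q` in `L` and `d` is the symmetrized Cartan matrix. -/
noncomputable def zetaVal (d : I → I → ℤ) {L : Type} [Field L] (qL : L) (i j : I) (w : L) : L :=
  if i < j then qL ^ (-(d i j)) - w
  else if i = j then (qL ^ (-(d i j)) - w) / (1 - w)
  else 1 - qL ^ (-(d i j)) * w⁻¹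

variable (n : I → ℕ)

/-- The space `𝒱_𝐧` of color-symmetric Laurent polynomials over a field `K`. -/
noncomputable def VSymF (K : Type) [Field K] :
    Submodule K (LaurentPoly K (Σ i : I, Fin (n i))) where
  carrier := {F | ∀ σ : Equiv.Perm (Σ i : I, Fin (n i)),
    (∀ c, (σ c).1 = c.1) → lpRename (K := K) σ F = F}
  add_mem' := by intro F G hF hG σ hσ; simp [map_add, hF σ hσ, hG σ hσ]
  zero_mem' := by intro σ hσ; simp
  smul_mem' := by intro c F hF σ hσ; simp [map_smul, hF σ hσ]

/-- The space `V_𝐱` of Laurent polynomials over a field `K`, symmetric under exchanging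
`z_{ia}` and `z_{ib}` whenever `x_{ia} = x_{ib}`. -/
noncomputable def VxSymF (K : Type) [Field K] (x : (Σ i : I, Fin (n i)) → QQqˣ) :
    Submodule K (LaurentPoly K (Σ i : I, Fin (n i))) where
  carrier := {F | ∀ σ : Equiv.Perm (Σ i : I, Fin (n i)),
    (∀ c, (σ c).1 = c.1 ∧ x (σ c) = x c) → lpRename (K := K) σ F = F}
  add_mem' := by intro F G hF hG σ hσ; simp [map_add, hF σ hσ, hG σ hσ]
  zero_mem' := by intro σ hσ; simp
  smul_mem' := by intro c F hF σ hσ; simp [map_smul, hF σ hσ]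

variable {n}

/-- The residue conditions defining `Θ(ψ)_𝐱 ⊆ 𝒱_𝐧`, where `psiv i w` is the evaluation of
`ψ_i(z)/z` at `z = w` (so that `psiv` encodes the highest ℓ-weight `ψ`). -/
noncomputable def ThetaPsiCond (d : I → I → ℤ) (x : (Σ i : I, Fin (n i)) → QQqˣ)
    (psiv : I → IterLaurent QQq (∑ i, n i) → IterLaurent QQq (∑ i, n i))
    (F : LaurentPoly QQq (Σ i : I, Fin (n i))) : Prop :=
  ∀ (e : Fin (∑ i, n i) ≃ (Σ i : I, Fin (n i))) (dd : Fin (∑ i, n i) → ℤ),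
    ires QQq (∑ i, n i) (
      (∏ a, (constIL QQq (∑ i, n i) ((x (e a) : QQq)) * (1 + tvar QQq (∑ i, n i) a)) ^ dd a) *
      lpEval (constIL QQq (∑ i, n i))
        (fun c => constIL QQq (∑ i, n i) ((x c : QQq)) * (1 + tvar QQq (∑ i, n i) (e.symm c))) F *
      (∏ a, psiv (e a).1
        (constIL QQq (∑ i, n i) ((x (e a) : QQq)) * (1 + tvar QQq (∑ i, n i) a))) *
      ∏ p ∈ Finset.filter (fun p : Fin (∑ i, n i) × Fin (∑ i, n i) => p.1 < p.2) Finset.univ,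
        (zetaVal d (constIL QQq (∑ i, n i) qq) (e p.2).1 (e p.1).1
          ((constIL QQq (∑ i, n i) ((x (e p.2) : QQq)) * (1 + tvar QQq (∑ i, n i) p.2)) /
           (constIL QQq (∑ i, n i) ((x (e p.1) : QQq)) * (1 + tvar QQq (∑ i, n i) p.1))))⁻¹) = 0

/-- The value of `ψ_i(z)/z` at `z = w`, for a highest ℓ-weight with data `c`, `l`, `m`
(zeroes of order `l_{i,γ}` and poles of order `m_{i,γ}` at `γ ∈ 𝕂*`). -/
noncomputable def psiOverZVal {L : Type} [Field L] (φ : QQq →+* L)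
    (c : I → QQqˣ) (l m : I → QQqˣ →₀ ℕ) (i : I) (w : L) : L :=
  φ (c i) * ((l i).prod fun γ k => (1 - φ (γ : QQq) / w) ^ (k : ℤ)) *
    ((m i).prod fun γ k => (1 - φ (γ : QQq) / w) ^ (-(k : ℤ))) / w

open Classical in
/-- The set `Θ_𝐱^{𝐦'} ⊆ V_𝐱` (over `ℚ`). -/
noncomputable def ThetaX (d : I → I → ℤ) (x : (Σ i : I, Fin (n i)) → QQqˣ)
    (m' : (Σ i : I, Fin (n i)) → ℤ) : Set (LaurentPoly ℚ (Σ i : I, Fin (n i))) :=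
  {F | F ∈ VxSymF n ℚ x ∧
    ∀ (e : Fin (∑ i, n i) ≃ (Σ i : I, Fin (n i))) (dd : Fin (∑ i, n i) → ℤ),
      ires ℚ (∑ i, n i) (
        (∏ a, (1 + tvar ℚ (∑ i, n i) a) ^ dd a) *
        lpEval (constIL ℚ (∑ i, n i)) (fun c => 1 + tvar ℚ (∑ i, n i) (e.symm c)) F *
        (∏ p ∈ Finset.filter (fun p : Fin (∑ i, n i) × Fin (∑ i, n i) => p.1 < p.2) Finset.univ,
          (tvar ℚ (∑ i, n i) p.2 - tvar ℚ (∑ i, n i) p.1) ^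
            (((if (e p.1).1 = (e p.2).1 ∧ x (e p.1) = x (e p.2) then 1 else 0) : ℤ) -
             ((if (x (e p.1) : QQq) = (x (e p.2) : QQq) * qq ^ d (e p.1).1 (e p.2).1
                then 1 else 0) : ℤ))) *
        ∏ a, tvar ℚ (∑ i, n i) a ^ (-(m' (e a)))) = 0}

/-- Extension of coefficients from `ℚ` to `𝕂` of a Laurent polynomial. -/
noncomputable def extQK {ι : Type} (F : LaurentPoly ℚ ι) : LaurentPoly QQq ι :=
  AddMonoidAlgebra.ofCoeff (Finsupp.mapRange (algebraMap ℚ QQq) (map_zero _) F.coeff)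

/-- Rescaling of variables `z_{ia} ↦ x_{ia}·z_{ia}` of a Laurent polynomial over `𝕂`. -/
noncomputable def rescale {ι : Type} (x : ι → QQqˣ) (F : LaurentPoly QQq ι) :
    LaurentPoly QQq ι :=
  AddMonoidAlgebra.ofCoeff (F.coeff.sum fun dd c => Finsupp.single dd (c * dd.prod fun a k => (x a : QQq) ^ k))

end SetupB

/-! ### ℓ-weights with zeroes and poles in `q^ℤ` -/

/-- `q` as a unit of `𝕂`. -/
noncomputable def qUnit : QQqˣ := Units.mk0 qq (by simpa [qq] using RatFunc.X_ne_zero)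

/-- Conversion of exponent data indexed by `s ∈ ℤ` to exponent data indexed by `γ = q^s ∈ 𝕂*`. -/
noncomputable def gammaOfZ (lz : ℤ →₀ ℕ) : QQqˣ →₀ ℕ :=
  Finsupp.mapDomain (fun s : ℤ => qUnit ^ s) lz

/-- The element `Δ_𝐥 = ∏_{i∈I}∏_{a=1}^{n_i}∏_{s∈ℤ} (1 − q^s/z_{ia})^{l_{i,s}} ∈ 𝒱_𝐧`. -/
noncomputable def deltaL {I : Type} [Fintype I] [DecidableEq I] {n : I → ℕ} (l : I → ℤ →₀ ℕ) :
    LaurentPoly QQq (Σ i : I, Fin (n i)) :=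
  ∏ cc : (Σ i : I, Fin (n i)), (l cc.1).prod fun s k =>
    ((1 : LaurentPoly QQq (Σ i : I, Fin (n i))) -
      AddMonoidAlgebra.single (Finsupp.single cc (-1 : ℤ)) (qq ^ s)) ^ k

/-! ### Auxiliary lemmas for the proof -/

section AuxIL

def toLS {K : Type} [Field K] {n : ℕ} (x : IterLaurent K (n+1)) :
    LaurentSeries (IterLaurent K n) := x

lemma toLS_add {K : Type} [Field K] {n : ℕ} (x y : IterLaurent K (n+1)) :
    toLS (x + y) = toLS x + toLS y := rfl
lemma toLS_mul {K : Type} [Field K] {n : ℕ} (x y : IterLaurent K (n+1)) :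
    toLS (x * y) = toLS x * toLS y := rfl
lemma toLS_zero {K : Type} [Field K] {n : ℕ} : toLS (0 : IterLaurent K (n+1)) = 0 := rfl
lemma toLS_one {K : Type} [Field K] {n : ℕ} : toLS (1 : IterLaurent K (n+1)) = 1 := rfl

lemma ires_succ {K : Type} [Field K] {n : ℕ} (x : IterLaurent K (n+1)) :
    ires K (n+1) x = ires K n ((toLS x).coeff (-1)) := rfl

lemma constIL_succ {K : Type} [Field K] {n : ℕ} (k : K) :
    toLS (constIL K (n+1) k) = HahnSeries.C (constIL K n k) := rfl

lemma tvar_zero {K : Type} [Field K] {n : ℕ} (h : (0:ℕ) < n+1) :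
    toLS (tvar K (n+1) ⟨0, h⟩) = HahnSeries.single (1:ℤ) 1 := rfl

lemma tvar_succ {K : Type} [Field K] {n : ℕ} (a : ℕ) (h : a+1 < n+1) :
    toLS (tvar K (n+1) ⟨a+1, h⟩) = HahnSeries.C (tvar K n ⟨a, by omega⟩) := rfl

lemma ires_add {K : Type} [Field K] : ∀ (n : ℕ) (x y : IterLaurent K n),
    ires K n (x + y) = ires K n x + ires K n y
  | 0, _, _ => rfl
  | n+1, x, y => by
    rw [ires_succ, ires_succ, ires_succ, toLS_add, HahnSeries.coeff_add, ires_add n]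

lemma ires_zero {K : Type} [Field K] : ∀ (n : ℕ), ires K n (0 : IterLaurent K n) = 0
  | 0 => rfl
  | n+1 => by rw [ires_succ, toLS_zero, HahnSeries.coeff_zero, ires_zero n]

lemma ires_constIL_mul {K : Type} [Field K] : ∀ (n : ℕ) (k : K) (x : IterLaurent K n),
    ires K n (constIL K n k * x) = k * ires K n x
  | 0, _, _ => rfl
  | n+1, k, x => by
    rw [ires_succ, toLS_mul, constIL_succ, ires_succ,
      show (HahnSeries.C (constIL K n k) : LaurentSeries (IterLaurent K n))
        = HahnSeries.single 0 (constIL K n k) from rfl,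
      HahnSeries.coeff_single_zero_mul, ires_constIL_mul n]

lemma one_add_tvar_ne_zero {K : Type} [Field K] : ∀ (n : ℕ) (a : Fin n),
    (1 + tvar K n a : IterLaurent K n) ≠ 0
  | n+1, ⟨0, _⟩ => by
    intro hc
    have h2 := congrArg toLS hc
    rw [toLS_add, toLS_one, toLS_zero, tvar_zero] at h2
    have := congrArg (fun z : LaurentSeries (IterLaurent K n) => z.coeff (0:ℤ)) h2
    simp at this
  | n+1, ⟨a+1, h⟩ => by
    intro hc
    have h2 := congrArg toLS hc
    rw [toLS_add, toLS_one, toLS_zero, tvar_succ, ← map_one (HahnSeries.C), ← map_add] at h2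
    exact one_add_tvar_ne_zero n ⟨a, by omega⟩
      (HahnSeries.C_injective (Γ := ℤ) (R := IterLaurent K n) (by simpa using h2))

lemma constIL_ne_zero {K : Type} [Field K] (n : ℕ) {k : K} (hk : k ≠ 0) :
    constIL K n k ≠ 0 :=
  fun h => hk ((constIL K n).injective (by rw [h, map_zero]))

end AuxIL

section AuxLpEval

variable {K L ι : Type} [CommRing K] [Field L] (φ : K →+* L) (v : ι → L)

noncomputable def lpMon (hv : ∀ a, v a ≠ 0) : Multiplicative (ι →₀ ℤ) →* L where
  toFun := fun d => (Multiplicative.toAdd d).prod fun a k => v a ^ k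
  map_one' := by simp
  map_mul' := by
    intro d1 d2
    classical
    show ((Multiplicative.toAdd d1 + Multiplicative.toAdd d2).prod fun a k => v a ^ k) = _
    rw [Finsupp.prod_add_index (fun a _ => zpow_zero (v a))
      (fun a _ k1 k2 => zpow_add₀ (hv a) _ _)]

noncomputable def lpEvalHom (hv : ∀ a, v a ≠ 0) : LaurentPoly K ι →+* L :=
  AddMonoidAlgebra.liftNCRingHom φ (lpMon v hv) (fun _ _ => Commute.all _ _)

lemma lpEval_eq (hv : ∀ a, v a ≠ 0) (F : LaurentPoly K ι) :
    lpEval φ v F = lpEvalHom φ v hv F := by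
  show _ = AddMonoidAlgebra.liftNC (φ : K →+ L) (lpMon v hv) F
  unfold lpEval AddMonoidAlgebra.liftNC
  simp [Finsupp.liftAddHom_apply, lpMon]
  rfl

lemma lpEval_single (d : ι →₀ ℤ) (c : K) :
    lpEval φ v (AddMonoidAlgebra.single d c) = φ c * d.prod fun a k => v a ^ k :=
  by unfold lpEval; rw [AddMonoidAlgebra.coeff_single]; exact Finsupp.sum_single_index (by simp)

lemma lpEval_smul (hv : ∀ a, v a ≠ 0) (k : K) (F : LaurentPoly K ι) :
    lpEval φ v (k • F) = φ k * lpEval φ v F := by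
  rw [lpEval_eq φ v hv, lpEval_eq φ v hv]
  exact AddMonoidAlgebra.liftNC_smul φ (lpMon v hv) k F

lemma lpEval_mul (hv : ∀ a, v a ≠ 0) (F G : LaurentPoly K ι) :
    lpEval φ v (F * G) = lpEval φ v F * lpEval φ v G := by
  rw [lpEval_eq φ v hv, lpEval_eq φ v hv, lpEval_eq φ v hv, map_mul]

lemma lpEval_add (F G : LaurentPoly K ι) :
    lpEval φ v (F + G) = lpEval φ v F + lpEval φ v G :=
  by unfold lpEval; rw [AddMonoidAlgebra.coeff_add]; exact Finsupp.sum_add_index' (by simp) (by intro d c1 c2; rw [map_add, add_mul])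

lemma lpEval_zero : lpEval φ v (0 : LaurentPoly K ι) = 0 := by unfold lpEval; rw [AddMonoidAlgebra.coeff_zero]; exact Finsupp.sum_zero_index

end AuxLpEval

section AuxRename

lemma lpRename_single' {K : Type} [CommRing K] {ι κ : Type} (e : ι ≃ κ) (d : ι →₀ ℤ) (c : K) :
    lpRename (K := K) e (AddMonoidAlgebra.single d c)
      = AddMonoidAlgebra.single (Finsupp.equivMapDomain e d) c := by
  simp [lpRename, AddMonoidAlgebra.domCongr_single]

lemma one_sub_single_ne_zero {ι : Type} {d : ι →₀ ℤ} (hd : d ≠ 0) (c : QQq) :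
    (1 - AddMonoidAlgebra.single d c : LaurentPoly QQq ι) ≠ 0 := by
  intro h
  rw [sub_eq_zero, AddMonoidAlgebra.one_def] at h
  rcases AddMonoidAlgebra.single_inj.mp h with ⟨h1, -⟩ | ⟨h1, -⟩
  · exact hd h1.symm
  · exact one_ne_zero h1

end AuxRename

section AuxDelta

variable {I : Type} [Fintype I] [DecidableEq I] {n : I → ℕ}

lemma deltaL_ne_zero (l : I → ℤ →₀ ℕ) : (deltaL (n := n) l) ≠ 0 := by
  unfold deltaL
  rw [Finset.prod_ne_zero_iff]
  intro cc _
  rw [Finsupp.prod, Finset.prod_ne_zero_iff]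
  intro s _
  exact pow_ne_zero _ (one_sub_single_ne_zero (by simp) _)

lemma lpRename_deltaL (l : I → ℤ →₀ ℕ) (σ : Equiv.Perm (Σ i : I, Fin (n i)))
    (hσ : ∀ cc, (σ cc).1 = cc.1) :
    lpRename (K := QQq) σ (deltaL (n := n) l) = deltaL l := by
  unfold deltaL
  rw [map_prod]
  have key : ∀ cc : Σ i : I, Fin (n i),
      lpRename (K := QQq) σ ((l cc.1).prod fun s k =>
        ((1 : LaurentPoly QQq (Σ i : I, Fin (n i))) -
          AddMonoidAlgebra.single (Finsupp.single cc (-1 : ℤ)) (qq ^ s)) ^ k)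
      = (l (σ cc).1).prod fun s k =>
        ((1 : LaurentPoly QQq (Σ i : I, Fin (n i))) -
          AddMonoidAlgebra.single (Finsupp.single (σ cc) (-1 : ℤ)) (qq ^ s)) ^ k := by
    intro cc
    rw [map_finsuppProd, hσ cc]
    refine Finsupp.prod_congr fun s k => ?_
    rw [map_pow, map_sub, map_one, lpRename_single', Finsupp.equivMapDomain_single]
  calc (∏ cc : Σ i : I, Fin (n i), lpRename (K := QQq) σ ((l cc.1).prod fun s k =>
        ((1 : LaurentPoly QQq (Σ i : I, Fin (n i))) -
          AddMonoidAlgebra.single (Finsupp.single cc (-1 : ℤ)) (qq ^ s)) ^ k))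
      = ∏ cc : Σ i : I, Fin (n i), (l (σ cc).1).prod fun s k =>
        ((1 : LaurentPoly QQq (Σ i : I, Fin (n i))) -
          AddMonoidAlgebra.single (Finsupp.single (σ cc) (-1 : ℤ)) (qq ^ s)) ^ k :=
        Finset.prod_congr rfl fun cc _ => key cc
    _ = _ := Equiv.prod_comp σ fun cc => (l cc.1).prod fun s k =>
        ((1 : LaurentPoly QQq (Σ i : I, Fin (n i))) -
          AddMonoidAlgebra.single (Finsupp.single cc (-1 : ℤ)) (qq ^ s)) ^ k

lemma deltaL_mul_mem_VSymF_iff (l : I → ℤ →₀ ℕ) (F : LaurentPoly QQq (Σ i : I, Fin (n i))) :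
    deltaL (n := n) l * F ∈ VSymF n QQq ↔ F ∈ VSymF n QQq := by
  constructor
  · intro h σ hσ
    have h2 := h σ hσ
    rw [map_mul, lpRename_deltaL l σ hσ] at h2
    exact mul_left_cancel₀ (deltaL_ne_zero l) h2
  · intro h σ hσ
    rw [map_mul, lpRename_deltaL l σ hσ, h σ hσ]

lemma lpEval_deltaL {L : Type} [Field L] (φ : QQq →+* L) (v : (Σ i : I, Fin (n i)) → L)
    (hv : ∀ cc, v cc ≠ 0) (l : I → ℤ →₀ ℕ) :
    lpEval φ v (deltaL (n := n) l)
      = ∏ cc : Σ i : I, Fin (n i), (l cc.1).prod fun s k => (1 - φ qq ^ s / v cc) ^ k := by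
  unfold deltaL
  rw [lpEval_eq φ v hv, map_prod]
  refine Finset.prod_congr rfl fun cc _ => ?_
  rw [map_finsuppProd]
  refine Finsupp.prod_congr fun s k => ?_
  rw [map_pow, map_sub, map_one, ← lpEval_eq φ v hv, lpEval_single,
    Finsupp.prod_single_index (h := fun a k => v a ^ k) (zpow_zero _), zpow_neg_one, map_zpow₀, div_eq_mul_inv]

end AuxDelta

section AuxPsi

lemma gammaOfZ_prod {L : Type} [Field L] (φ : QQq →+* L) (lz : ℤ →₀ ℕ) (w : L) :
    ((gammaOfZ lz).prod fun γ k => (1 - φ (γ : QQq) / w) ^ (k : ℤ))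
      = lz.prod fun s k => (1 - φ qq ^ s / w) ^ k := by
  classical
  unfold gammaOfZ
  rw [Finsupp.prod_mapDomain_index (fun γ => by simp)
    (fun γ k1 k2 => by rw [zpow_natCast, zpow_natCast, zpow_natCast, pow_add])]
  refine Finsupp.prod_congr fun s _ => ?_
  rw [Units.val_zpow_eq_zpow_val, show ((qUnit : QQq)) = qq from rfl, map_zpow₀, zpow_natCast]

lemma psiOverZVal_decomp {I L : Type} [Field L] (φ : QQq →+* L)
    (c : I → QQqˣ) (l m : I → ℤ →₀ ℕ) (i : I) (w : L) :
    psiOverZVal φ c (fun i => gammaOfZ (l i)) (fun i => gammaOfZ (m i)) i w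
      = φ ((c i : QQq)) * ((l i).prod fun s k => (1 - φ qq ^ s / w) ^ k) *
        psiOverZVal φ (fun _ => 1) (fun _ => 0) (fun i => gammaOfZ (m i)) i w := by
  unfold psiOverZVal
  rw [gammaOfZ_prod φ (l i) w]
  simp only [Units.val_one, map_one, Finsupp.prod_zero_index, one_mul]
  ring

end AuxPsi

section AuxTheta

variable {I : Type} [Fintype I] [LinearOrder I] {n : I → ℕ}

lemma mul_shuffle_smul {L : Type} [Field L] (z1 ck a ψ z2 : L) :
    z1 * (ck * a) * ψ * z2 = ck * (z1 * a * ψ * z2) := by ring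

lemma mul_shuffle_main {L : Type} [Field L] (z1 f ψd z2 c0 dl : L) :
    z1 * f * (c0 * dl * ψd) * z2 = c0 * (z1 * (dl * f) * ψd * z2) := by ring

lemma vv_ne_zero (x : (Σ i : I, Fin (n i)) → QQqˣ) (e : Fin (∑ i, n i) ≃ (Σ i : I, Fin (n i)))
    (cc : Σ i : I, Fin (n i)) :
    constIL QQq (∑ i, n i) ((x cc : QQq)) * (1 + tvar QQq (∑ i, n i) (e.symm cc)) ≠ 0 :=
  mul_ne_zero (constIL_ne_zero _ (Units.ne_zero _)) (one_add_tvar_ne_zero _ _)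

/-- The set defining `Θ(ψ)_𝐱` is a submodule. -/
noncomputable def thetaSubmodule (d : I → I → ℤ) (x : (Σ i : I, Fin (n i)) → QQqˣ)
    (psiv : I → IterLaurent QQq (∑ i, n i) → IterLaurent QQq (∑ i, n i)) :
    Submodule QQq (LaurentPoly QQq (Σ i : I, Fin (n i))) where
  carrier := {F | F ∈ VSymF n QQq ∧ ThetaPsiCond d x psiv F}
  add_mem' := by
    rintro F G ⟨hF1, hF2⟩ ⟨hG1, hG2⟩
    refine ⟨(VSymF n QQq).add_mem hF1 hG1, fun e dd => ?_⟩
    have h1 := hF2 e dd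
    have h2 := hG2 e dd
    rw [lpEval_add, mul_add, add_mul, add_mul, ires_add, h1, h2, add_zero]
  zero_mem' := by
    refine ⟨(VSymF n QQq).zero_mem, fun e dd => ?_⟩
    rw [lpEval_zero, mul_zero, zero_mul, zero_mul, ires_zero]
  smul_mem' := by
    rintro k F ⟨hF1, hF2⟩
    refine ⟨(VSymF n QQq).smul_mem k hF1, fun e dd => ?_⟩
    have h1 := hF2 e dd
    rw [lpEval_smul _ _ (vv_ne_zero x e), mul_shuffle_smul, ires_constIL_mul, h1, mul_zero]

lemma mem_thetaSubmodule (d : I → I → ℤ) (x : (Σ i : I, Fin (n i)) → QQqˣ)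
    (psiv : I → IterLaurent QQq (∑ i, n i) → IterLaurent QQq (∑ i, n i))
    (F : LaurentPoly QQq (Σ i : I, Fin (n i))) :
    F ∈ thetaSubmodule d x psiv ↔ F ∈ VSymF n QQq ∧ ThetaPsiCond d x psiv F := Iff.rfl

end AuxTheta


/-- Suppose `ψ` has all zeroes and poles in `q^ℤ` and all entries of `𝐱` are
integer powers of `q`. Then `F ∈ Θ(ψ)_𝐱 ⟺ Δ_𝐥·F ∈ Θ(1/ψ^den)_𝐱`, and multiplication by
`Δ_𝐥` induces a `𝕂`-linear isomorphism
`𝒱_𝐧/Θ(ψ)_𝐱 ≅ (Δ_𝐥·𝒱_𝐧)/((Δ_𝐥·𝒱_𝐧) ∩ Θ(1/ψ^den)_𝐱)`. -/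
theorem statement9 {I : Type} [Fintype I] [LinearOrder I]
    (d : I → I → ℤ)
    (hdsym : ∀ i j, d i j = d j i) (hdpos : ∀ i, 0 < d i i) (hdeven : ∀ i, Even (d i i))
    (hdneg : ∀ i j, i ≠ j → d i j ≤ 0) (hdint : ∀ i j, d i i ∣ 2 * d i j)
    (n : I → ℕ)
    (c : I → QQqˣ) (l m : I → ℤ →₀ ℕ)
    (x : (Σ i : I, Fin (n i)) → QQqˣ)
    (hx : ∀ cc : Σ i : I, Fin (n i), ∃ s : ℤ, (x cc : QQq) = qq ^ s) :
    (∀ F : LaurentPoly QQq (Σ i : I, Fin (n i)),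
      (F ∈ {F | F ∈ VSymF n QQq ∧ ThetaPsiCond d x
          (psiOverZVal (constIL QQq (∑ i, n i)) c (fun i => gammaOfZ (l i))
            (fun i => gammaOfZ (m i))) F} ↔
        deltaL l * F ∈ {F | F ∈ VSymF n QQq ∧ ThetaPsiCond d x
          (psiOverZVal (constIL QQq (∑ i, n i)) (fun _ => 1) (fun _ => 0)
            (fun i => gammaOfZ (m i))) F})) ∧
    ∃ Θ1 Θ2 : Submodule QQq (LaurentPoly QQq (Σ i : I, Fin (n i))),
      (Θ1 : Set (LaurentPoly QQq (Σ i : I, Fin (n i)))) =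
        {F | F ∈ VSymF n QQq ∧ ThetaPsiCond d x
          (psiOverZVal (constIL QQq (∑ i, n i)) c (fun i => gammaOfZ (l i))
            (fun i => gammaOfZ (m i))) F} ∧
      (Θ2 : Set (LaurentPoly QQq (Σ i : I, Fin (n i)))) =
        {F | F ∈ VSymF n QQq ∧ ThetaPsiCond d x
          (psiOverZVal (constIL QQq (∑ i, n i)) (fun _ => 1) (fun _ => 0)
            (fun i => gammaOfZ (m i))) F} ∧
      ∃ iso : (VSymF n QQq ⧸ Θ1.comap (VSymF n QQq).subtype) ≃ₗ[QQq]
          ((Submodule.map (LinearMap.mulLeft QQq (deltaL l)) (VSymF n QQq)) ⧸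
            Θ2.comap (Submodule.map (LinearMap.mulLeft QQq (deltaL l)) (VSymF n QQq)).subtype),
        ∀ F : VSymF n QQq,
          iso (Submodule.Quotient.mk F) =
            Submodule.Quotient.mk ⟨deltaL l * (F : LaurentPoly QQq (Σ i : I, Fin (n i))),
              Submodule.mem_map_of_mem F.2⟩ := by
  classical
  have hC0 : (∏ cc : Σ i : I, Fin (n i), ((c cc.1 : QQq))) ≠ 0 :=
    Finset.prod_ne_zero_iff.mpr fun cc _ => Units.ne_zero _
  have hPsi : ∀ e : Fin (∑ i, n i) ≃ (Σ i : I, Fin (n i)),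
      (∏ a, psiOverZVal (constIL QQq (∑ i, n i)) c (fun i => gammaOfZ (l i))
          (fun i => gammaOfZ (m i)) (e a).1
          (constIL QQq (∑ i, n i) ((x (e a) : QQq)) * (1 + tvar QQq (∑ i, n i) a)))
      = constIL QQq (∑ i, n i) (∏ cc : Σ i : I, Fin (n i), ((c cc.1 : QQq))) *
        lpEval (constIL QQq (∑ i, n i))
          (fun cc => constIL QQq (∑ i, n i) ((x cc : QQq)) *
            (1 + tvar QQq (∑ i, n i) (e.symm cc))) (deltaL l) *
        (∏ a, psiOverZVal (constIL QQq (∑ i, n i)) (fun _ => 1) (fun _ => 0)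
          (fun i => gammaOfZ (m i)) (e a).1
          (constIL QQq (∑ i, n i) ((x (e a) : QQq)) * (1 + tvar QQq (∑ i, n i) a))) := by
    intro e
    have step1 : (∏ a, psiOverZVal (constIL QQq (∑ i, n i)) c (fun i => gammaOfZ (l i))
          (fun i => gammaOfZ (m i)) (e a).1
          (constIL QQq (∑ i, n i) ((x (e a) : QQq)) * (1 + tvar QQq (∑ i, n i) a)))
        = ∏ a, (constIL QQq (∑ i, n i) ((c (e a).1 : QQq)) *
            ((l (e a).1).prod fun s k => (1 - constIL QQq (∑ i, n i) qq ^ s /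
              (constIL QQq (∑ i, n i) ((x (e a) : QQq)) * (1 + tvar QQq (∑ i, n i) a))) ^ k) *
            psiOverZVal (constIL QQq (∑ i, n i)) (fun _ => 1) (fun _ => 0)
              (fun i => gammaOfZ (m i)) (e a).1
              (constIL QQq (∑ i, n i) ((x (e a) : QQq)) * (1 + tvar QQq (∑ i, n i) a))) :=
      Finset.prod_congr rfl fun a _ =>
        psiOverZVal_decomp (constIL QQq (∑ i, n i)) c l m (e a).1 _
    rw [step1, Finset.prod_mul_distrib, Finset.prod_mul_distrib]
    congr 1
    congr 1
    · rw [map_prod]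
      exact Equiv.prod_comp e (fun cc => constIL QQq (∑ i, n i) ((c cc.1 : QQq)))
    · rw [lpEval_deltaL (constIL QQq (∑ i, n i)) _ (vv_ne_zero x e) l]
      rw [← Equiv.prod_comp e (fun cc => (l cc.1).prod fun s k =>
        (1 - constIL QQq (∑ i, n i) qq ^ s /
          (constIL QQq (∑ i, n i) ((x cc : QQq)) * (1 + tvar QQq (∑ i, n i) (e.symm cc)))) ^ k)]
      refine Finset.prod_congr rfl fun a _ => ?_
      simp only [Equiv.symm_apply_apply]
  have thetaIff : ∀ F : LaurentPoly QQq (Σ i : I, Fin (n i)),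
      ThetaPsiCond d x (psiOverZVal (constIL QQq (∑ i, n i)) c (fun i => gammaOfZ (l i))
        (fun i => gammaOfZ (m i))) F ↔
      ThetaPsiCond d x (psiOverZVal (constIL QQq (∑ i, n i)) (fun _ => 1) (fun _ => 0)
        (fun i => gammaOfZ (m i))) (deltaL l * F) := by
    intro F
    unfold ThetaPsiCond
    refine forall_congr' fun e => forall_congr' fun dd => ?_
    rw [hPsi e, mul_shuffle_main, ← lpEval_mul _ _ (vv_ne_zero x e), ires_constIL_mul,
      mul_eq_zero]
    simp [hC0]
  have main : ∀ F : LaurentPoly QQq (Σ i : I, Fin (n i)),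
      (F ∈ VSymF n QQq ∧ ThetaPsiCond d x (psiOverZVal (constIL QQq (∑ i, n i)) c
          (fun i => gammaOfZ (l i)) (fun i => gammaOfZ (m i))) F) ↔
      (deltaL l * F ∈ VSymF n QQq ∧ ThetaPsiCond d x (psiOverZVal (constIL QQq (∑ i, n i))
          (fun _ => 1) (fun _ => 0) (fun i => gammaOfZ (m i))) (deltaL l * F)) :=
    fun F => and_congr (deltaL_mul_mem_VSymF_iff l F).symm (thetaIff F)
  refine ⟨fun F => main F, ?_⟩
  set psivF := psiOverZVal (constIL QQq (∑ i, n i)) c (fun i => gammaOfZ (l i))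
    (fun i => gammaOfZ (m i)) with hpF
  set psivD := psiOverZVal (constIL QQq (∑ i, n i)) (fun _ => 1) (fun _ => 0)
    (fun i => gammaOfZ (m i)) with hpD
  set W := VSymF n QQq with hW
  set W' := Submodule.map (LinearMap.mulLeft QQq (deltaL l)) (VSymF n QQq) with hW'
  let f : W →ₗ[QQq] W' :=
    (LinearMap.mulLeft QQq (deltaL l)).restrict fun F hF => Submodule.mem_map_of_mem hF
  let g : W →ₗ[QQq] (W' ⧸ (thetaSubmodule d x psivD).comap W'.subtype) :=
    ((thetaSubmodule d x psivD).comap W'.subtype).mkQ.comp f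
  have hker : LinearMap.ker g = (thetaSubmodule d x psivF).comap W.subtype := by
    ext F
    simp only [LinearMap.mem_ker, Submodule.mem_comap, g, f, LinearMap.coe_comp,
      Function.comp_apply, Submodule.mkQ_apply, Submodule.Quotient.mk_eq_zero,
      Submodule.coe_subtype, LinearMap.restrict_apply, LinearMap.mulLeft_apply]
    exact (main (F : LaurentPoly QQq (Σ i : I, Fin (n i)))).symm
  have hsurj : Function.Surjective g := by
    intro y
    obtain ⟨w, rfl⟩ := Submodule.Quotient.mk_surjective _ y
    obtain ⟨z, hz⟩ := w
    obtain ⟨F, hF, hFz⟩ := Submodule.mem_map.mp hz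
    refine ⟨⟨F, hF⟩, ?_⟩
    have hfF : f ⟨F, hF⟩ = ⟨z, hz⟩ := Subtype.ext hFz
    show Submodule.Quotient.mk (f ⟨F, hF⟩) = _
    rw [hfF]
  refine ⟨thetaSubmodule d x psivF, thetaSubmodule d x psivD, rfl, rfl,
    (Submodule.quotEquivOfEq _ _ hker.symm).trans (g.quotKerEquivOfSurjective hsurj), ?_⟩
  intro F
  rfl
end

section
/- For every i ∈ I and every representation T of Q, the map Hom(I_i^*, T) → T_i sending a morphism η to η_i(∅_i) is an isomorphism of ℂ-vector spaces. -/
/-- Representations of the quiver with vertex set `I`, arrow set `E`, and incidence maps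
`tl, hd : E → I`, over `ℂ`. -/
structure QRep (I E : Type) (tl hd : E → I) where
  T : I → Type
  [addgrp : ∀ i, AddCommGroup (T i)]
  [mod : ∀ i, Module ℂ (T i)]
  φ : (e : E) → T (tl e) →ₗ[ℂ] T (hd e)

attribute [instance] QRep.addgrp QRep.mod

/-- Paths in the quiver from `i` to `j` (including the empty path when `i = j`). -/
inductive QPath {I E : Type} (tl hd : E → I) : I → I → Type
  | nil (i : I) : QPath tl hd i i
  | cons {i j : I} (p : QPath tl hd i j) (e : E) (h : tl e = j) : QPath tl hd i (hd e)

variable {I E : Type} (tl hd : E → I)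

/-- The representation `I_i^*`: at vertex `j`, the free `ℂ`-vector space on the set of paths
from `i` to `j`; an arrow `e` acts by concatenation `p ↦ ep`. -/
noncomputable def dualInj (i : I) : QRep I E tl hd where
  T := fun j => QPath tl hd i j →₀ ℂ
  φ := fun e => Finsupp.lmapDomain ℂ ℂ (fun p => QPath.cons p e rfl)

/-- The space of morphisms of representations `A → B`, as a submodule of
`Π j, Hom_ℂ(A_j, B_j)`. -/
noncomputable def HomSub (A B : QRep I E tl hd) :
    Submodule ℂ ((j : I) → (A.T j →ₗ[ℂ] B.T j)) where
  carrier := {η | ∀ e : E, (η (hd e)).comp (A.φ e) = (B.φ e).comp (η (tl e))}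
  add_mem' := by
    intro f g hf hg e
    simp [LinearMap.add_comp, LinearMap.comp_add, hf e, hg e]
  zero_mem' := by intro e; simp
  smul_mem' := by
    intro c f hf e
    simp [LinearMap.smul_comp, LinearMap.comp_smul, hf e]

/-- Evaluation of a morphism `I_i^* → B` at the empty path `∅_i`. -/
noncomputable def evalAtNil (i : I) (B : QRep I E tl hd) :
    HomSub tl hd (dualInj tl hd i) B →ₗ[ℂ] B.T i where
  toFun := fun η => (η.1 i) (Finsupp.single (QPath.nil i) 1)
  map_add' := fun _ _ => rfl
  map_smul' := fun _ _ => rfl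

/-- Evaluation of a path in a representation. -/
noncomputable def evalPath (B : QRep I E tl hd) {i : I} :
    ∀ {j : I}, QPath tl hd i j → (B.T i →ₗ[ℂ] B.T j)
  | _, .nil _ => LinearMap.id
  | _, .cons p e h => (B.φ e).comp (by rw [h]; exact evalPath B p)

lemma key (B : QRep I E tl hd) (i : I)
    (η : HomSub tl hd (dualInj tl hd i) B) :
    ∀ {j : I} (p : QPath tl hd i j),
      η.1 j (Finsupp.single p 1) =
        evalPath tl hd B p (η.1 i (Finsupp.single (QPath.nil i) 1)) := by
  intro j p
  induction p with
  | nil => rfl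
  | @cons k p e h ih =>
    subst h
    have hc := LinearMap.congr_fun (η.2 e) (Finsupp.single p 1)
    simp only [LinearMap.coe_comp, Function.comp_apply] at hc
    have hφ : ((dualInj tl hd i).φ e) (Finsupp.single p 1) =
        Finsupp.single (QPath.cons p e rfl) 1 := by
      exact Finsupp.mapDomain_single
    replace hc : η.1 (hd e) (Finsupp.single (QPath.cons p e rfl) 1) =
        B.φ e (η.1 (tl e) (Finsupp.single p 1)) := by rw [← hφ]; exact hc
    rw [hc, ih]
    rfl

/-- For every `i ∈ I` and every representation `T` of `Q`, the map
`Hom(I_i^*, T) → T_i`, `η ↦ η_i(∅_i)`, is an isomorphism of `ℂ`-vector spaces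
(it is `ℂ`-linear by construction, and bijective). -/
theorem statement11 {I E : Type} [Fintype I] (tl hd : E → I) (i : I) (B : QRep I E tl hd) :
    Function.Bijective (evalAtNil tl hd i B) := by
  constructor
  · intro η η' hηη
    apply Subtype.ext
    funext j
    apply Finsupp.lhom_ext
    intro p c
    have h1 := key tl hd B i η p
    have h2 := key tl hd B i η' p
    have : (η.1 i) (Finsupp.single (QPath.nil i) 1)
        = (η'.1 i) (Finsupp.single (QPath.nil i) 1) := hηη
    have hp : η.1 j (Finsupp.single p 1) = η'.1 j (Finsupp.single p 1) := by
      rw [h1, h2, this]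
    calc η.1 j (Finsupp.single p c) = c • η.1 j (Finsupp.single p 1) := by
            rw [← Finsupp.smul_single_one p c]; exact map_smul _ _ _
      _ = c • η'.1 j (Finsupp.single p 1) := by rw [hp]
      _ = η'.1 j (Finsupp.single p c) := by
            rw [← Finsupp.smul_single_one p c]; exact (map_smul _ _ _).symm
  · intro t
    refine ⟨⟨fun j => Finsupp.lift (B.T j) ℂ (QPath tl hd i j)
        (fun p => evalPath tl hd B p t), ?_⟩, ?_⟩
    · intro e
      apply Finsupp.lhom_ext
      intro p c
      simp only [LinearMap.coe_comp, Function.comp_apply, dualInj,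
        Finsupp.lmapDomain_apply, Finsupp.mapDomain_single]
      change Finsupp.lift (B.T (hd e)) ℂ (QPath tl hd i (hd e)) (fun p => evalPath tl hd B p t)
          (Finsupp.mapDomain (fun p => QPath.cons p e rfl) (Finsupp.single p c)) =
        B.φ e (Finsupp.lift (B.T (tl e)) ℂ (QPath tl hd i (tl e))
          (fun p => evalPath tl hd B p t) (Finsupp.single p c))
      rw [Finsupp.mapDomain_single, Finsupp.lift_apply, Finsupp.lift_apply, Finsupp.sum_single_index (by simp),
        Finsupp.sum_single_index (by simp), LinearMap.map_smul]
      rfl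
    · show (Finsupp.lift (B.T i) ℂ (QPath tl hd i i)
        (fun p => evalPath tl hd B p t)) (Finsupp.single (QPath.nil i) 1) = t
      rw [Finsupp.lift_apply, Finsupp.sum_single_index (by simp), one_smul]
      rfl
end
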